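/- arXiv:2007.13057 — 8 statements merged into one kernel-verified Lean document; each statement's English description precedes it below -/
import Mathlib

section
/- Every quaternion matrix has a unique Moore–Penrose inverse: for every matrix A over the quaternion algebra ℍ (with arbitrary finite index types m × n) there exists a unique matrix X (of index type n × m) satisfying the four Penrose equations A X A = A, X A X = X, (A X)* = A X and (X A)* = X A, where * denotes the conjugate transpose. -/
open Matrix

/-- The four Penrose equations over the quaternions: `X` is a Moore–Penrose
inverse of `A`. -/
def IsMP {m n : Type*} [Fintype m] [Fintype n]
    (A : Matrix m n (Quaternion ℝ)) (X : Matrix n m (Quaternion ℝ)) : Prop :=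
  A * X * A = A ∧ X * A * X = X ∧ (A * X)ᴴ = A * X ∧ (X * A)ᴴ = X * A

namespace MPaux

local notation "H" => Quaternion ℝ

lemma coe_sum {ι : Type*} (s : Finset ι) (r : ι → ℝ) :
    ((∑ i ∈ s, r i : ℝ) : H) = ∑ i ∈ s, (r i : H) := by
  rw [← Quaternion.algebraMap_def, map_sum]

lemma sum_normSq_eq_zero {ι : Type*} [Fintype ι] {y : ι → H}
    (h : ∑ i, ((Quaternion.normSq (y i) : ℝ) : H) = 0) : ∀ i, y i = 0 := by
  rw [← coe_sum] at h
  have h2 : (∑ i, Quaternion.normSq (y i) : ℝ) = 0 := by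
    have := Quaternion.algebraMap_injective (R := ℝ)
    rw [Quaternion.algebraMap_def] at this
    exact this (by simpa using h)
  intro i
  exact Quaternion.normSq_eq_zero.mp
    ((Finset.sum_eq_zero_iff_of_nonneg (fun i _ => Quaternion.normSq_nonneg)).mp h2 i
      (Finset.mem_univ i))

/-- Quaternionic pairing of two (row) vectors. -/
noncomputable def pair {n : Type*} [Fintype n] (u v : n → H) : H := u ⬝ᵥ star v

lemma star_pair {n : Type*} [Fintype n] (u v : n → H) : star (pair u v) = pair v u := by
  simp only [pair, dotProduct, Pi.star_apply, star_sum, StarMul.star_mul, star_star]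

lemma pair_vecMul {m n : Type*} [Fintype m] [Fintype n] (M : Matrix m n H)
    (x : m → H) (y : n → H) : pair (x ᵥ* M) y = pair x (y ᵥ* Mᴴ) := by
  simp only [pair, dotProduct, vecMul, Pi.star_apply, conjTranspose_apply, dotProduct,
    star_sum, StarMul.star_mul, star_star, Finset.sum_mul, Finset.mul_sum]
  rw [Finset.sum_comm]
  refine Finset.sum_congr rfl fun j _ => Finset.sum_congr rfl fun i _ => ?_
  rw [mul_assoc]

lemma pair_self_eq_zero {n : Type*} [Fintype n] {y : n → H} (h : pair y y = 0) : y = 0 := by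
  have h1 : ∑ i, ((Quaternion.normSq (y i) : ℝ) : H) = 0 := by
    rw [← h]
    simp [pair, dotProduct, Pi.star_apply, Quaternion.self_mul_star]
  funext i
  exact sum_normSq_eq_zero h1 i

lemma eq_zero_of_conjTranspose_mul_self_eq_zero {m n : Type*} [Fintype m] [Fintype n]
    {M : Matrix m n H} (h : Mᴴ * M = 0) : M = 0 := by
  refine Matrix.ext fun i j => ?_
  have h1 : (Mᴴ * M) j j = 0 := by rw [h]; rfl
  rw [Matrix.mul_apply] at h1
  simp only [conjTranspose_apply, Quaternion.star_mul_self] at h1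
  simpa using sum_normSq_eq_zero (y := fun k => M k j) h1 i


lemma vecMul_ext {m n : Type*} [Fintype m] [Fintype n] [DecidableEq m]
    {M N : Matrix m n H} (h : ∀ x, x ᵥ* M = x ᵥ* N) : M = N := by
  have h2 : M.vecMulLinear = N.vecMulLinear := LinearMap.ext h
  have := (LinearMap.toMatrixRight' (R := H) (m := m) (n := n)).symm.injective h2
  simpa using this

lemma exists_group_inverse {n : Type*} [Fintype n] (B : Matrix n n H) (hB : Bᴴ = B) :
    ∃ C : Matrix n n H, Cᴴ = C ∧ C * B = B * C ∧ B * C * B = B ∧ C * B * C = C := by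
  classical
  set f : (n → H) →ₗ[H] (n → H) := B.vecMulLinear with hfdef
  set W := LinearMap.range f with hW
  have hmem : ∀ x, f x ∈ W := fun x => LinearMap.mem_range_self f x
  have hfapp : ∀ x, f x = x ᵥ* B := fun x => rfl
  -- f is self-adjoint for `pair`
  have pf : ∀ x y, pair (f x) y = pair x (f y) := by
    intro x y
    rw [hfapp, hfapp, pair_vecMul, hB]
  -- elements of W killed by f vanish
  have hWker : ∀ w : n → H, w ∈ W → f w = 0 → w = 0 := by
    rintro _ ⟨x, rfl⟩ hx
    refine pair_self_eq_zero ?_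
    rw [pf x (f x), hx]
    simp [pair]
  let f' : W →ₗ[H] W := f.restrict fun x _ => hmem x
  have hinj : Function.Injective f' := by
    rw [← LinearMap.ker_eq_bot, LinearMap.ker_eq_bot']
    intro w hw
    exact Subtype.ext (hWker w.1 w.2 (congrArg Subtype.val hw))
  have hbij : Function.Bijective f' := ⟨hinj, LinearMap.injective_iff_surjective.mp hinj⟩
  let e : W ≃ₗ[H] W := LinearEquiv.ofBijective f' hbij
  let s : W →ₗ[H] W := e.symm
  have hfe : ∀ w : W, f w.1 = (e w).1 := fun w => rfl
  have hes : ∀ w : W, e (s w) = w := fun w => e.apply_symm_apply w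
  have hse : ∀ w : W, s (e w) = w := fun w => e.symm_apply_apply w
  let g : (n → H) →ₗ[H] (n → H) :=
    W.subtype ∘ₗ s ∘ₗ s ∘ₗ f.codRestrict W hmem
  have hg : ∀ x, g x = (s (s ⟨f x, hmem x⟩)).1 := fun x => rfl
  -- key subtype identity
  have hsub : ∀ x : n → H, (⟨f (f x), hmem (f x)⟩ : W) = e ⟨f x, hmem x⟩ := by
    intro x
    exact Subtype.ext (hfe ⟨f x, hmem x⟩)
  have hgf : ∀ x, g (f x) = (s ⟨f x, hmem x⟩).1 := by
    intro x
    rw [hg (f x)]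
    congr 1
    rw [hsub, hse]
  have hfg : ∀ x, f (g x) = (s ⟨f x, hmem x⟩).1 := by
    intro x
    rw [hg]
    rw [hfe (s (s ⟨f x, hmem x⟩)), hes]
  have hfgf : ∀ x, f (g (f x)) = f x := by
    intro x
    rw [hfg (f x)]
    rw [hsub, hse]
  have hgfg : ∀ x, g (f (g x)) = g x := by
    intro x
    rw [hfg x, hg]
    have key : (⟨f ((s ⟨f x, hmem x⟩).1), hmem ((s ⟨f x, hmem x⟩).1)⟩ : W)
        = ⟨f x, hmem x⟩ :=
      Subtype.ext (show f ((s ⟨f x, hmem x⟩).1) = f x by rw [hfe, hes])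
    rw [key]
    exact (hg x).symm
  -- self-adjointness of g
  have stepA : ∀ w w' : W, pair (s w).1 w'.1 = pair w.1 (s w').1 := by
    intro w w'
    have h1 : w'.1 = f (s w').1 := by rw [hfe, hes]
    have h2 : w.1 = f (s w).1 := by rw [hfe, hes]
    calc pair (s w).1 w'.1 = pair (s w).1 (f (s w').1) := by rw [← h1]
      _ = pair (f (s w).1) (s w').1 := (pf _ _).symm
      _ = pair w.1 (s w').1 := by rw [← h2]
  have stepB : ∀ (w : W) (v : n → H), pair w.1 v = pair (s w).1 (f v) := by
    intro w v
    conv_lhs => rw [show w.1 = f (s w).1 by rw [hfe, hes]]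
    exact pf _ _
  have pg : ∀ x y, pair (g x) y = pair x (g y) := by
    intro x y
    set X : W := ⟨f x, hmem x⟩
    set Y : W := ⟨f y, hmem y⟩
    have hfy : f y = Y.1 := rfl
    calc pair (g x) y = pair (s (s X)).1 y := by rw [hg]
      _ = pair (s (s (s X))).1 (f y) := stepB _ _
      _ = pair (s (s X)).1 (s Y).1 := by rw [hfy]; rw [stepA]
      _ = pair (s X).1 (s (s Y)).1 := stepA _ _
      _ = pair X.1 (s (s (s Y))).1 := stepA _ _
      _ = pair x (f (s (s (s Y))).1) := pf _ _
      _ = pair x (s (s Y)).1 := by rw [hfe, hes]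
      _ = pair x (g y) := by rw [hg]
  -- the matrix C
  let C : Matrix n n H := LinearMap.toMatrixRight' g
  have hCvm : ∀ x, x ᵥ* C = g x := by
    intro x
    have h2 : C.vecMulLinear = g := LinearMap.toMatrixRight'.symm_apply_apply g
    calc x ᵥ* C = C.vecMulLinear x := rfl
      _ = g x := by rw [h2]
  refine ⟨C, ?_, ?_, ?_, ?_⟩
  · -- Cᴴ = C
    refine Matrix.ext fun i j => ?_
    have hent : ∀ (D : Matrix n n H) i j, D i j = pair (Pi.single i 1 ᵥ* D) (Pi.single j 1) := by
      intro D i j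
      simp [pair, dotProduct, Pi.single_apply, vecMul, apply_ite]
    rw [conjTranspose_apply, hent C j i, hent C i j, hCvm, hCvm, star_pair,
      pg]
  · refine vecMul_ext fun x => ?_
    rw [← Matrix.vecMul_vecMul, ← Matrix.vecMul_vecMul, hCvm, ← hfapp, ← hfapp, hCvm, hfg, hgf]
  · refine vecMul_ext fun x => ?_
    rw [← Matrix.vecMul_vecMul, ← Matrix.vecMul_vecMul, ← hfapp, hCvm, ← hfapp, hfgf]
  · refine vecMul_ext fun x => ?_
    rw [← Matrix.vecMul_vecMul, ← Matrix.vecMul_vecMul, hCvm, ← hfapp, hCvm, hgfg]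


end MPaux

/-- Every quaternion matrix has a unique Moore–Penrose inverse. -/
theorem exists_unique_moorePenrose {m n : Type*} [Fintype m] [Fintype n]
    (A : Matrix m n (Quaternion ℝ)) :
    ∃! X : Matrix n m (Quaternion ℝ), IsMP A X := by
  classical
  obtain ⟨C, hCst, hCB, hBCB, hCBC⟩ :=
    MPaux.exists_group_inverse (Aᴴ * A) (by rw [conjTranspose_mul, conjTranspose_conjTranspose])
  have hBCB' : Aᴴ * (A * (C * (Aᴴ * A))) = Aᴴ * A := by
    simpa only [Matrix.mul_assoc] using hBCB
  have hCBC' : C * (Aᴴ * (A * C)) = C := by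
    simpa only [Matrix.mul_assoc] using hCBC
  have hCB' : C * (Aᴴ * A) = Aᴴ * (A * C) := by
    simpa only [Matrix.mul_assoc] using hCB
  -- key : A * C * (Aᴴ * A) = A
  have hACB : A * C * (Aᴴ * A) = A := by
    have hz : (A * C * (Aᴴ * A) - A)ᴴ * (A * C * (Aᴴ * A) - A) = 0 := by
      simp only [conjTranspose_sub, conjTranspose_mul, conjTranspose_conjTranspose, hCst,
        Matrix.sub_mul, Matrix.mul_sub, Matrix.mul_assoc]
      simp only [hBCB']
      abel
    have := MPaux.eq_zero_of_conjTranspose_mul_self_eq_zero hz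
    rwa [sub_eq_zero] at this
  set X : Matrix n m (Quaternion ℝ) := C * Aᴴ with hXdef
  have hX1 : A * X * A = A := by
    calc A * X * A = A * C * (Aᴴ * A) := by rw [hXdef]; simp only [Matrix.mul_assoc]
      _ = A := hACB
  have hX2 : X * A * X = X := by
    rw [hXdef]
    calc C * Aᴴ * A * (C * Aᴴ) = (C * (Aᴴ * (A * C))) * Aᴴ := by simp only [Matrix.mul_assoc]
      _ = C * Aᴴ := by rw [hCBC']
  have hX3 : (A * X)ᴴ = A * X := by
    rw [hXdef]
    calc (A * (C * Aᴴ))ᴴ = A * (Cᴴ * Aᴴ) := by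
          simp only [conjTranspose_mul, conjTranspose_conjTranspose, Matrix.mul_assoc]
      _ = A * (C * Aᴴ) := by rw [hCst]
  have hX4 : (X * A)ᴴ = X * A := by
    rw [hXdef]
    calc (C * Aᴴ * A)ᴴ = Aᴴ * (A * Cᴴ) := by
          simp only [conjTranspose_mul, conjTranspose_conjTranspose, Matrix.mul_assoc]
      _ = Aᴴ * (A * C) := by rw [hCst]
      _ = C * (Aᴴ * A) := hCB'.symm
      _ = C * Aᴴ * A := by simp only [Matrix.mul_assoc]
  refine ⟨X, ⟨hX1, hX2, hX3, hX4⟩, ?_⟩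
  rintro Y ⟨hY1, hY2, hY3, hY4⟩
  have hAYX : A * Y = A * X := by
    calc A * Y = (A * Y)ᴴ := hY3.symm
      _ = Yᴴ * Aᴴ := by rw [conjTranspose_mul]
      _ = Yᴴ * (A * X * A)ᴴ := by rw [hX1]
      _ = Yᴴ * (Aᴴ * (A * X)ᴴ) := by rw [conjTranspose_mul]
      _ = Yᴴ * Aᴴ * (A * X) := by rw [hX3, Matrix.mul_assoc]
      _ = (A * Y)ᴴ * (A * X) := by rw [conjTranspose_mul]
      _ = A * Y * (A * X) := by rw [hY3]
      _ = (A * Y * A) * X := by simp only [Matrix.mul_assoc]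
      _ = A * X := by rw [hY1]
  have hYXA : Y * A = X * A := by
    calc Y * A = (Y * A)ᴴ := hY4.symm
      _ = Aᴴ * Yᴴ := by rw [conjTranspose_mul]
      _ = (A * X * A)ᴴ * Yᴴ := by rw [hX1]
      _ = (X * A)ᴴ * Aᴴ * Yᴴ := by
          simp only [conjTranspose_mul, Matrix.mul_assoc]
      _ = X * A * Aᴴ * Yᴴ := by rw [hX4]
      _ = X * A * (Y * A)ᴴ := by rw [conjTranspose_mul, Matrix.mul_assoc, Matrix.mul_assoc]
      _ = X * A * (Y * A) := by rw [hY4]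
      _ = X * (A * Y * A) := by simp only [Matrix.mul_assoc]
      _ = X * A := by rw [hY1]
  calc Y = Y * A * Y := hY2.symm
    _ = Y * (A * X) := by rw [Matrix.mul_assoc, hAYX]
    _ = Y * A * X := by rw [Matrix.mul_assoc]
    _ = X * A * X := by rw [hYXA]
    _ = X := hX2
end

section
/- Let A ∈ ℍ^{m×k}, B ∈ ℍ^{o×n}, E ∈ ℍ^{m×n} be quaternion matrices. The equation A X + Y B = E has a solution (X, Y) with X ∈ ℍ^{k×n}, Y ∈ ℍ^{m×o} if and only if R_A E L_B = 0; in that case, a pair (X, Y) is a solution if and only if there exist matrices T₁ ∈ ℍ^{k×o}, T₂ ∈ ℍ^{k×n}, T₃ ∈ ℍ^{m×o} such that X = A† E − T₁ B + L_A T₂ and Y = R_A E B† + A T₁ + T₃ R_B. -/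
open Matrix

/-- The equation `A X + Y B = E` is solvable iff `R_A E L_B = 0`, and in that case
`(X, Y)` is a solution iff
`X = A† E − T₁ B + L_A T₂` and `Y = R_A E B† + A T₁ + T₃ R_B` for some `T₁ T₂ T₃`. -/
theorem ax_plus_yb_eq_e {m k o n : Type*}
    [Fintype m] [Fintype k] [Fintype o] [Fintype n]
    [DecidableEq m] [DecidableEq n] [DecidableEq k] [DecidableEq o]
    (A : Matrix m k (Quaternion ℝ)) (B : Matrix o n (Quaternion ℝ))
    (E : Matrix m n (Quaternion ℝ))
    (Ad : Matrix k m (Quaternion ℝ)) (Bd : Matrix n o (Quaternion ℝ))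
    (hA : IsMP A Ad) (hB : IsMP B Bd) :
    ((∃ (X : Matrix k n (Quaternion ℝ)) (Y : Matrix m o (Quaternion ℝ)),
        A * X + Y * B = E) ↔ (1 - A * Ad) * E * (1 - Bd * B) = 0) ∧
    ((1 - A * Ad) * E * (1 - Bd * B) = 0 →
      ∀ (X : Matrix k n (Quaternion ℝ)) (Y : Matrix m o (Quaternion ℝ)),
        A * X + Y * B = E ↔
          ∃ (T₁ : Matrix k o (Quaternion ℝ)) (T₂ : Matrix k n (Quaternion ℝ))
            (T₃ : Matrix m o (Quaternion ℝ)),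
            X = Ad * E - T₁ * B + (1 - Ad * A) * T₂ ∧
            Y = (1 - A * Ad) * E * Bd + A * T₁ + T₃ * (1 - B * Bd)) := by
  obtain ⟨hA1, hA2, hA3, hA4⟩ := hA
  obtain ⟨hB1, hB2, hB3, hB4⟩ := hB
  have h1 : (1 - A * Ad) * A = 0 := by
    rw [Matrix.sub_mul, Matrix.one_mul, hA1, sub_self]
  have hAL : A * (1 - Ad * A) = 0 := by
    rw [Matrix.mul_sub, Matrix.mul_one, ← Matrix.mul_assoc, hA1, sub_self]
  have h2 : B * (1 - Bd * B) = 0 := by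
    rw [Matrix.mul_sub, Matrix.mul_one, ← Matrix.mul_assoc, hB1, sub_self]
  have hRB : (1 - B * Bd) * B = 0 := by
    rw [Matrix.sub_mul, Matrix.one_mul, hB1, sub_self]
  -- forward solvability
  have fwd : ∀ (X : Matrix k n (Quaternion ℝ)) (Y : Matrix m o (Quaternion ℝ)),
      A * X + Y * B = E → (1 - A * Ad) * E * (1 - Bd * B) = 0 := by
    intro X Y hXY
    rw [← hXY, Matrix.mul_add, Matrix.add_mul, ← Matrix.mul_assoc (1 - A * Ad) A X,
      h1, Matrix.zero_mul, Matrix.zero_mul, zero_add,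
      Matrix.mul_assoc (1 - A * Ad) (Y * B) (1 - Bd * B),
      Matrix.mul_assoc Y B (1 - Bd * B), h2, Matrix.mul_zero, Matrix.mul_zero]
  constructor
  · constructor
    · rintro ⟨X, Y, hXY⟩
      exact fwd X Y hXY
    · intro h0
      refine ⟨Ad * E, (1 - A * Ad) * E * Bd, ?_⟩
      have key : (1 - A * Ad) * E * Bd * B = (1 - A * Ad) * E := by
        rw [Matrix.mul_sub, Matrix.mul_one, ← Matrix.mul_assoc, sub_eq_zero] at h0
        exact h0.symm
      rw [key, Matrix.sub_mul, Matrix.one_mul, ← Matrix.mul_assoc]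
      abel
  · intro h0 X Y
    have key : (1 - A * Ad) * E * Bd * B = (1 - A * Ad) * E := by
      rw [Matrix.mul_sub, Matrix.mul_one, ← Matrix.mul_assoc, sub_eq_zero] at h0
      exact h0.symm
    constructor
    · intro hXY
      refine ⟨Ad * Y, X, (1 - A * Ad) * Y, ?_, ?_⟩
      · have hAdE : Ad * E = Ad * (A * X) + Ad * (Y * B) := by
          rw [← hXY, Matrix.mul_add]
        rw [hAdE, Matrix.sub_mul, Matrix.one_mul, ← Matrix.mul_assoc Ad A X,
          ← Matrix.mul_assoc Ad Y B]
        abel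
      · have hRAE : (1 - A * Ad) * E = (1 - A * Ad) * Y * B := by
          rw [← hXY, Matrix.mul_add, ← Matrix.mul_assoc, h1, Matrix.zero_mul, zero_add,
            Matrix.mul_assoc]
        rw [hRAE]
        simp only [Matrix.sub_mul, Matrix.mul_sub, Matrix.one_mul, Matrix.mul_one,
          Matrix.mul_assoc]
        abel
    · rintro ⟨T₁, T₂, T₃, hX, hY⟩
      subst hX hY
      have e1 : A * (Ad * E - T₁ * B + (1 - Ad * A) * T₂) = A * Ad * E - A * T₁ * B := by
        rw [Matrix.mul_add, Matrix.mul_sub, ← Matrix.mul_assoc A Ad E,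
          ← Matrix.mul_assoc A T₁ B, ← Matrix.mul_assoc A (1 - Ad * A) T₂, hAL,
          Matrix.zero_mul, add_zero]
      have e2 : ((1 - A * Ad) * E * Bd + A * T₁ + T₃ * (1 - B * Bd)) * B
          = (1 - A * Ad) * E * Bd * B + A * T₁ * B := by
        rw [Matrix.add_mul, Matrix.add_mul, Matrix.mul_assoc T₃ (1 - B * Bd) B, hRB,
          Matrix.mul_zero, add_zero]
      rw [e1, e2, key, Matrix.sub_mul, Matrix.one_mul]
      abel
end

section
/- Let A ∈ ℍ^{m×a}, B ∈ ℍ^{b×n}, C ∈ ℍ^{m×c}, D ∈ ℍ^{d×n}, E ∈ ℍ^{m×n} be quaternion matrices, and set P = R_A C, Q = D L_B, S = C L_P. The generalized Sylvester equation A X B + C Y D = E has a solution (X, Y) with X ∈ ℍ^{a×b}, Y ∈ ℍ^{c×d} if and only if R_P R_A E = 0, E L_B L_Q = 0, R_A E L_D = 0 and R_C E L_B = 0. -/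
open Matrix

set_option maxHeartbeats 2000000

/-- With `P = R_A C`, `Q = D L_B`, the generalized Sylvester equation
`A X B + C Y D = E` is solvable iff
`R_P R_A E = 0`, `E L_B L_Q = 0`, `R_A E L_D = 0` and `R_C E L_B = 0`. -/
theorem axb_plus_cyd_solvable_iff {m a b n c d : Type*}
    [Fintype m] [Fintype a] [Fintype b] [Fintype n] [Fintype c] [Fintype d]
    [DecidableEq m] [DecidableEq n] [DecidableEq c] [DecidableEq d]
    (A : Matrix m a (Quaternion ℝ)) (B : Matrix b n (Quaternion ℝ))
    (C : Matrix m c (Quaternion ℝ)) (D : Matrix d n (Quaternion ℝ))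
    (E : Matrix m n (Quaternion ℝ))
    (Ad : Matrix a m (Quaternion ℝ)) (Bd : Matrix n b (Quaternion ℝ))
    (Cd : Matrix c m (Quaternion ℝ)) (Dd : Matrix n d (Quaternion ℝ))
    (hA : IsMP A Ad) (hB : IsMP B Bd) (hC : IsMP C Cd) (hD : IsMP D Dd)
    (P : Matrix m c (Quaternion ℝ)) (Q : Matrix d n (Quaternion ℝ))
    (hP : P = (1 - A * Ad) * C) (hQ : Q = D * (1 - Bd * B))
    (Pd : Matrix c m (Quaternion ℝ)) (Qd : Matrix n d (Quaternion ℝ))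
    (hPd : IsMP P Pd) (hQd : IsMP Q Qd) :
    (∃ (X : Matrix a b (Quaternion ℝ)) (Y : Matrix c d (Quaternion ℝ)),
        A * X * B + C * Y * D = E) ↔
      (1 - P * Pd) * (1 - A * Ad) * E = 0 ∧
      E * (1 - Bd * B) * (1 - Qd * Q) = 0 ∧
      (1 - A * Ad) * E * (1 - Dd * D) = 0 ∧
      (1 - C * Cd) * E * (1 - Bd * B) = 0 := by
  obtain ⟨hA1, hA2, hA3, hA4⟩ := hA
  obtain ⟨hB1, hB2, hB3, hB4⟩ := hB
  obtain ⟨hC1, hC2, hC3, hC4⟩ := hC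
  obtain ⟨hD1, hD2, hD3, hD4⟩ := hD
  obtain ⟨hP1, hP2, hP3, hP4⟩ := hPd
  obtain ⟨hQ1, hQ2, hQ3, hQ4⟩ := hQd
  have hRA_A : (1 - A * Ad) * A = 0 := by
    rw [Matrix.sub_mul, Matrix.one_mul, hA1, sub_self]
  have hB_LB : B * (1 - Bd * B) = 0 := by
    rw [Matrix.mul_sub, Matrix.mul_one, ← Matrix.mul_assoc B Bd B, hB1, sub_self]
  have hRC_C : (1 - C * Cd) * C = 0 := by
    rw [Matrix.sub_mul, Matrix.one_mul, hC1, sub_self]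
  have hD_LD : D * (1 - Dd * D) = 0 := by
    rw [Matrix.mul_sub, Matrix.mul_one, ← Matrix.mul_assoc D Dd D, hD1, sub_self]
  have hRP_P : (1 - P * Pd) * P = 0 := by
    rw [Matrix.sub_mul, Matrix.one_mul, hP1, sub_self]
  have hP_LP : P * (1 - Pd * P) = 0 := by
    rw [Matrix.mul_sub, Matrix.mul_one, ← Matrix.mul_assoc P Pd P, hP1, sub_self]
  have hQ_LQ : Q * (1 - Qd * Q) = 0 := by
    rw [Matrix.mul_sub, Matrix.mul_one, ← Matrix.mul_assoc Q Qd Q, hQ1, sub_self]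
  constructor
  · rintro ⟨X, Y, h⟩
    have e1 : (1 - A * Ad) * E = P * Y * D := by
      rw [← h, Matrix.mul_add]
      have s1 : (1 - A * Ad) * (A * X * B) = 0 := by
        rw [← Matrix.mul_assoc (1 - A * Ad) (A * X) B,
          ← Matrix.mul_assoc (1 - A * Ad) A X, hRA_A, Matrix.zero_mul, Matrix.zero_mul]
      have s2 : (1 - A * Ad) * (C * Y * D) = P * Y * D := by
        rw [← Matrix.mul_assoc (1 - A * Ad) (C * Y) D,
          ← Matrix.mul_assoc (1 - A * Ad) C Y, ← hP]
      rw [s1, s2, zero_add]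
    have e2 : E * (1 - Bd * B) = C * Y * Q := by
      rw [← h, Matrix.add_mul]
      have s1 : A * X * B * (1 - Bd * B) = 0 := by
        rw [Matrix.mul_assoc (A * X) B (1 - Bd * B), hB_LB, Matrix.mul_zero]
      have s2 : C * Y * D * (1 - Bd * B) = C * Y * Q := by
        rw [Matrix.mul_assoc (C * Y) D (1 - Bd * B), ← hQ]
      rw [s1, s2, zero_add]
    refine ⟨?_, ?_, ?_, ?_⟩
    · rw [Matrix.mul_assoc (1 - P * Pd) (1 - A * Ad) E, e1,
        ← Matrix.mul_assoc (1 - P * Pd) (P * Y) D,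
        ← Matrix.mul_assoc (1 - P * Pd) P Y, hRP_P, Matrix.zero_mul, Matrix.zero_mul]
    · rw [e2, Matrix.mul_assoc (C * Y) Q (1 - Qd * Q), hQ_LQ, Matrix.mul_zero]
    · rw [e1, Matrix.mul_assoc (P * Y) D (1 - Dd * D), hD_LD, Matrix.mul_zero]
    · rw [Matrix.mul_assoc (1 - C * Cd) E (1 - Bd * B), e2,
        ← Matrix.mul_assoc (1 - C * Cd) (C * Y) Q,
        ← Matrix.mul_assoc (1 - C * Cd) C Y, hRC_C, Matrix.zero_mul, Matrix.zero_mul]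
  · rintro ⟨h1, h2, h3, h4⟩
    -- auxiliary consequences of the Penrose equations
    have hAAd2 : A * Ad * (A * Ad) = A * Ad := by
      rw [← Matrix.mul_assoc (A * Ad) A Ad, hA1]
    have hRA_AAd : (1 - A * Ad) * (A * Ad) = 0 := by
      rw [Matrix.sub_mul, Matrix.one_mul, hAAd2, sub_self]
    have hPH' : Pᴴ = Cᴴ * (1 - A * Ad) := by
      rw [hP, conjTranspose_mul, conjTranspose_sub, conjTranspose_one, hA3]
    have hPH : Pᴴ * (A * Ad) = 0 := by
      rw [hPH', Matrix.mul_assoc Cᴴ (1 - A * Ad) (A * Ad), hRA_AAd, Matrix.mul_zero]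
    have hPPd_eq : P * Pd = Pdᴴ * Pᴴ := by
      rw [← conjTranspose_mul, hP3]
    have hPd_eq : Pd = Pd * (Pdᴴ * Pᴴ) := by
      conv_lhs => rw [← hP2]
      rw [Matrix.mul_assoc Pd P Pd, hPPd_eq]
    have hPd_AAd : Pd * (A * Ad) = 0 := by
      conv_lhs => rw [hPd_eq]
      rw [Matrix.mul_assoc Pd (Pdᴴ * Pᴴ) (A * Ad), Matrix.mul_assoc Pdᴴ Pᴴ (A * Ad),
        hPH, Matrix.mul_zero, Matrix.mul_zero]
    have hPd_RA : Pd * (1 - A * Ad) = Pd := by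
      rw [Matrix.mul_sub, Matrix.mul_one, hPd_AAd, sub_zero]
    have hQH' : Qᴴ = (1 - Bd * B) * Dᴴ := by
      rw [hQ, conjTranspose_mul, conjTranspose_sub, conjTranspose_one, hB4]
    have hQH : B * Qᴴ = 0 := by
      rw [hQH', ← Matrix.mul_assoc B (1 - Bd * B) Dᴴ, hB_LB, Matrix.zero_mul]
    have hQdQ_eq : Qd * Q = Qᴴ * Qdᴴ := by
      rw [← conjTranspose_mul, hQ4]
    have hQd_eq : Qd = Qᴴ * Qdᴴ * Qd := by
      conv_lhs => rw [← hQ2]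
      rw [hQdQ_eq]
    have hB_Qd : B * Qd = 0 := by
      conv_lhs => rw [hQd_eq]
      rw [← Matrix.mul_assoc B (Qᴴ * Qdᴴ) Qd, ← Matrix.mul_assoc B Qᴴ Qdᴴ,
        hQH, Matrix.zero_mul, Matrix.zero_mul]
    have hLB_Qd : (1 - Bd * B) * Qd = Qd := by
      rw [Matrix.sub_mul, Matrix.one_mul, Matrix.mul_assoc Bd B Qd, hB_Qd,
        Matrix.mul_zero, sub_zero]
    -- rewrite the four solvability conditions
    have hPPd_RA : P * Pd * (1 - A * Ad) = P * Pd := by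
      rw [Matrix.mul_assoc P Pd (1 - A * Ad), hPd_RA]
    rw [Matrix.sub_mul, Matrix.one_mul, hPPd_RA, Matrix.sub_mul, sub_eq_zero] at h1
    rw [Matrix.mul_sub, Matrix.mul_one, sub_eq_zero] at h2
    rw [Matrix.mul_sub, Matrix.mul_one, sub_eq_zero] at h3
    rw [Matrix.sub_mul, Matrix.one_mul, Matrix.sub_mul, sub_eq_zero] at h4
    -- derived facts
    have hE_QdQ : E * Qd * Q = E * (1 - Bd * B) := by
      conv_lhs => rw [← hLB_Qd]
      rw [← Matrix.mul_assoc E (1 - Bd * B) Qd, Matrix.mul_assoc (E * (1 - Bd * B)) Qd Q,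
        ← h2]
    have hCCd : C * (Cd * (E * (1 - Bd * B))) = E * (1 - Bd * B) := by
      rw [← Matrix.mul_assoc C Cd (E * (1 - Bd * B)),
        ← Matrix.mul_assoc (C * Cd) E (1 - Bd * B), ← h4]
    have hPCd : P * (Cd * (E * (1 - Bd * B))) = (1 - A * Ad) * (E * (1 - Bd * B)) := by
      rw [hP, Matrix.mul_assoc (1 - A * Ad) C (Cd * (E * (1 - Bd * B))), hCCd]
    have hPdE : Pd * E = Pd * ((1 - A * Ad) * E) := by
      conv_lhs => rw [← hPd_RA]
      rw [Matrix.mul_assoc Pd (1 - A * Ad) E]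
    have hPdED : Pd * E * (Dd * D) = Pd * E := by
      rw [hPdE, Matrix.mul_assoc Pd ((1 - A * Ad) * E) (Dd * D), ← h3]
    -- the particular solution
    set Y0 : Matrix c d (Quaternion ℝ) :=
      Pd * E * Dd + (1 - Pd * P) * (Cd * (E * Qd)) with hY0
    have t1 : P * (Pd * E * Dd) * D = (1 - A * Ad) * E := by
      rw [← Matrix.mul_assoc P (Pd * E) Dd, ← Matrix.mul_assoc P Pd E, ← h1,
        Matrix.mul_assoc ((1 - A * Ad) * E) Dd D, ← h3]
    have t2 : P * ((1 - Pd * P) * (Cd * (E * Qd))) * D = 0 := by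
      rw [← Matrix.mul_assoc P (1 - Pd * P) (Cd * (E * Qd)), hP_LP,
        Matrix.zero_mul, Matrix.zero_mul]
    have u1 : C * (Pd * E * Dd) * Q = C * Pd * E * (1 - Bd * B) := by
      rw [hQ, ← Matrix.mul_assoc (C * (Pd * E * Dd)) D (1 - Bd * B),
        Matrix.mul_assoc C (Pd * E * Dd) D, Matrix.mul_assoc (Pd * E) Dd D, hPdED,
        ← Matrix.mul_assoc C Pd E]
    have u2 : C * ((1 - Pd * P) * (Cd * (E * Qd))) * Q =
        E * (1 - Bd * B) - C * Pd * E * (1 - Bd * B) := by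
      calc C * ((1 - Pd * P) * (Cd * (E * Qd))) * Q
          = C * ((1 - Pd * P) * (Cd * (E * Qd * Q))) := by
            rw [Matrix.mul_assoc C ((1 - Pd * P) * (Cd * (E * Qd))) Q,
              Matrix.mul_assoc (1 - Pd * P) (Cd * (E * Qd)) Q,
              Matrix.mul_assoc Cd (E * Qd) Q]
        _ = C * ((1 - Pd * P) * (Cd * (E * (1 - Bd * B)))) := by rw [hE_QdQ]
        _ = C * (Cd * (E * (1 - Bd * B))) -
              C * (Pd * (P * (Cd * (E * (1 - Bd * B))))) := by
            rw [Matrix.sub_mul, Matrix.one_mul, Matrix.mul_sub,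
              Matrix.mul_assoc Pd P (Cd * (E * (1 - Bd * B)))]
        _ = E * (1 - Bd * B) - C * (Pd * ((1 - A * Ad) * (E * (1 - Bd * B)))) := by
            rw [hCCd, hPCd]
        _ = E * (1 - Bd * B) - C * (Pd * (E * (1 - Bd * B))) := by
            rw [← Matrix.mul_assoc Pd (1 - A * Ad) (E * (1 - Bd * B)), hPd_RA]
        _ = E * (1 - Bd * B) - C * Pd * E * (1 - Bd * B) := by
            rw [← Matrix.mul_assoc C Pd (E * (1 - Bd * B)),
              ← Matrix.mul_assoc (C * Pd) E (1 - Bd * B)]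
    have F1 : (1 - A * Ad) * (C * Y0 * D) = (1 - A * Ad) * E := by
      calc (1 - A * Ad) * (C * Y0 * D) = P * Y0 * D := by
            rw [← Matrix.mul_assoc (1 - A * Ad) (C * Y0) D,
              ← Matrix.mul_assoc (1 - A * Ad) C Y0, ← hP]
        _ = P * (Pd * E * Dd) * D + P * ((1 - Pd * P) * (Cd * (E * Qd))) * D := by
            rw [hY0, Matrix.mul_add, Matrix.add_mul]
        _ = (1 - A * Ad) * E := by rw [t1, t2, add_zero]
    have F2 : C * Y0 * D * (1 - Bd * B) = E * (1 - Bd * B) := by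
      rw [Matrix.mul_assoc (C * Y0) D (1 - Bd * B), ← hQ, hY0, Matrix.mul_add,
        Matrix.add_mul, u1, u2]
      abel
    have hz1 : (1 - A * Ad) * (E - C * Y0 * D) = 0 := by
      rw [Matrix.mul_sub, F1, sub_self]
    have hz2 : (E - C * Y0 * D) * (1 - Bd * B) = 0 := by
      rw [Matrix.sub_mul, F2, sub_self]
    rw [Matrix.sub_mul, Matrix.one_mul, sub_eq_zero] at hz1
    rw [Matrix.mul_sub, Matrix.mul_one, sub_eq_zero] at hz2
    refine ⟨Ad * (E - C * Y0 * D) * Bd, Y0, ?_⟩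
    rw [← Matrix.mul_assoc A (Ad * (E - C * Y0 * D)) Bd,
      ← Matrix.mul_assoc A Ad (E - C * Y0 * D),
      Matrix.mul_assoc (A * Ad * (E - C * Y0 * D)) Bd B, ← hz1, ← hz2]
    abel
end

section
/- Let A ∈ ℍ^{m×a}, B ∈ ℍ^{b×n}, C ∈ ℍ^{m×c}, D ∈ ℍ^{d×n}, E ∈ ℍ^{m×n} be quaternion matrices, set P = R_A C, Q = D L_B, S = C L_P, and assume R_P R_A E = 0, E L_B L_Q = 0, R_A E L_D = 0 and R_C E L_B = 0. Then for arbitrary quaternion matrices U₁, U₂, U₃, U₄, U₅ of the appropriate sizes, the pair X = A† E B† − A† C P† E B† − A† S C† E Q† D B† − A† S U₂ R_Q D B† + L_A U₄ + U₅ R_B and Y = P† E D† + S† S C† E Q† + L_P L_S U₁ + L_P U₂ R_Q + U₃ R_D satisfies A X B + C Y D = E. -/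
open Matrix

set_option maxHeartbeats 4000000 in
/-- With `P = R_A C`, `Q = D L_B`, `S = C L_P`, if the consistency conditions hold,
then for arbitrary `U₁, …, U₅` the displayed pair `(X, Y)` solves
`A X B + C Y D = E`. -/
theorem axb_plus_cyd_solution_formula {m a b n c d : Type*}
    [Fintype m] [Fintype a] [Fintype b] [Fintype n] [Fintype c] [Fintype d]
    [DecidableEq m] [DecidableEq n] [DecidableEq a] [DecidableEq b]
    [DecidableEq c] [DecidableEq d]
    (A : Matrix m a (Quaternion ℝ)) (B : Matrix b n (Quaternion ℝ))
    (C : Matrix m c (Quaternion ℝ)) (D : Matrix d n (Quaternion ℝ))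
    (E : Matrix m n (Quaternion ℝ))
    (Ad : Matrix a m (Quaternion ℝ)) (Bd : Matrix n b (Quaternion ℝ))
    (Cd : Matrix c m (Quaternion ℝ)) (Dd : Matrix n d (Quaternion ℝ))
    (hA : IsMP A Ad) (hB : IsMP B Bd) (hC : IsMP C Cd) (hD : IsMP D Dd)
    (P : Matrix m c (Quaternion ℝ)) (Q : Matrix d n (Quaternion ℝ))
    (hP : P = (1 - A * Ad) * C) (hQ : Q = D * (1 - Bd * B))
    (Pd : Matrix c m (Quaternion ℝ)) (Qd : Matrix n d (Quaternion ℝ))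
    (hPd : IsMP P Pd) (hQd : IsMP Q Qd)
    (S : Matrix m c (Quaternion ℝ)) (hS : S = C * (1 - Pd * P))
    (Sd : Matrix c m (Quaternion ℝ)) (hSd : IsMP S Sd)
    (h1 : (1 - P * Pd) * (1 - A * Ad) * E = 0)
    (h2 : E * (1 - Bd * B) * (1 - Qd * Q) = 0)
    (h3 : (1 - A * Ad) * E * (1 - Dd * D) = 0)
    (h4 : (1 - C * Cd) * E * (1 - Bd * B) = 0) :
    ∀ (U₁ U₂ U₃ : Matrix c d (Quaternion ℝ)) (U₄ U₅ : Matrix a b (Quaternion ℝ)),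
      ∀ (X : Matrix a b (Quaternion ℝ)) (Y : Matrix c d (Quaternion ℝ)),
        X = Ad * E * Bd - Ad * C * Pd * E * Bd - Ad * S * Cd * E * Qd * D * Bd
            - Ad * S * U₂ * (1 - Q * Qd) * D * Bd
            + (1 - Ad * A) * U₄ + U₅ * (1 - B * Bd) →
        Y = Pd * E * Dd + Sd * S * Cd * E * Qd + (1 - Pd * P) * (1 - Sd * S) * U₁
            + (1 - Pd * P) * U₂ * (1 - Q * Qd) + U₃ * (1 - D * Dd) →
        A * X * B + C * Y * D = E := by
  obtain ⟨hA1, hA2, hA3, hA4⟩ := hA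
  obtain ⟨hB1, hB2, hB3, hB4⟩ := hB
  obtain ⟨hC1, hC2, hC3, hC4⟩ := hC
  obtain ⟨hD1, hD2, hD3, hD4⟩ := hD
  obtain ⟨hP1, hP2, hP3, hP4⟩ := hPd
  obtain ⟨hQ1, hQ2, hQ3, hQ4⟩ := hQd
  obtain ⟨hS1, hS2, hS3, hS4⟩ := hSd
  intro U₁ U₂ U₃ U₄ U₅ X Y hX hY
  -- basic idempotents
  have idemAAd : A*Ad*(A*Ad) = A*Ad := by
    rw [← Matrix.mul_assoc, hA1]
  have hRAH : ((1 : Matrix m m (Quaternion ℝ)) - A*Ad)ᴴ = 1 - A*Ad := by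
    rw [Matrix.conjTranspose_sub, Matrix.conjTranspose_one, hA3]
  have idemRA : ((1 : Matrix m m (Quaternion ℝ)) - A*Ad)*(1 - A*Ad) = 1 - A*Ad := by
    rw [Matrix.sub_mul, Matrix.one_mul, Matrix.mul_sub, Matrix.mul_one, idemAAd]
    abel
  have hRAP : ((1 : Matrix m m (Quaternion ℝ)) - A*Ad)*P = P := by
    rw [hP, ← Matrix.mul_assoc, idemRA]
  have hPPdP : P*(Pd*P) = P := by rw [← Matrix.mul_assoc, hP1]
  have kP : P*((1 : Matrix c c (Quaternion ℝ)) - Pd*P) = 0 := by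
    rw [Matrix.mul_sub, Matrix.mul_one, hPPdP, sub_self]
  have hAAdC : A*Ad*C = C - P := by
    rw [hP, Matrix.sub_mul, Matrix.one_mul]; abel
  have hAAdS : A*Ad*S = S := by
    rw [hS, ← Matrix.mul_assoc, hAAdC, Matrix.sub_mul, kP, sub_zero]
  -- P / S orthogonality
  have hPdPPH : Pd*P*Pᴴ = Pᴴ := by
    rw [← hP4, ← Matrix.conjTranspose_mul, ← Matrix.mul_assoc, hP1]
  have hSPH : S*Pᴴ = 0 := by
    rw [hS, Matrix.mul_assoc, Matrix.sub_mul, Matrix.one_mul, hPdPPH, sub_self,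
      Matrix.mul_zero]
  have hPSH : P*Sᴴ = 0 := by
    have h := congrArg Matrix.conjTranspose hSPH
    simpa using h
  have hPSd : P*Sd = 0 := by
    calc P*Sd = P*(Sd*S*Sd) := by rw [hS2]
      _ = P*((Sd*S)ᴴ*Sd) := by rw [hS4]
      _ = P*(Sᴴ*Sdᴴ*Sd) := by rw [Matrix.conjTranspose_mul]
      _ = 0 := by
          rw [← Matrix.mul_assoc, ← Matrix.mul_assoc, hPSH, Matrix.zero_mul,
            Matrix.zero_mul]
  have hPSdS : P*(Sd*S) = 0 := by rw [← Matrix.mul_assoc, hPSd, Matrix.zero_mul]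
  have hCdec : C = S + C*(Pd*P) := by
    rw [hS, Matrix.mul_sub, Matrix.mul_one]; abel
  have hCSdS : C*Sd*S = S := by
    calc C*Sd*S = (S + C*(Pd*P))*Sd*S := by rw [← hCdec]
      _ = S*Sd*S + C*(Pd*P)*Sd*S := by rw [Matrix.add_mul, Matrix.add_mul]
      _ = S + C*(Pd*P)*Sd*S := by rw [hS1]
      _ = S := by simp only [Matrix.mul_assoc, hPSdS, Matrix.mul_zero, add_zero]
  have hCPdP : C*Pd*P = C - S := by
    rw [hS, Matrix.mul_sub, Matrix.mul_one, Matrix.mul_assoc]; abel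
  -- P and R_A
  have hPHRA : Pᴴ*((1 : Matrix m m (Quaternion ℝ)) - A*Ad) = Pᴴ := by
    calc Pᴴ*((1 : Matrix m m (Quaternion ℝ)) - A*Ad)
        = Pᴴ*((1 : Matrix m m (Quaternion ℝ)) - A*Ad)ᴴ := by rw [hRAH]
      _ = (((1 : Matrix m m (Quaternion ℝ)) - A*Ad)*P)ᴴ := by
          rw [← Matrix.conjTranspose_mul]
      _ = Pᴴ := by rw [hRAP]
  have hPPdH : P*Pd = Pdᴴ*Pᴴ := by rw [← Matrix.conjTranspose_mul, hP3]
  have hPPdRA : P*Pd*((1 : Matrix m m (Quaternion ℝ)) - A*Ad) = P*Pd := by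
    rw [hPPdH, Matrix.mul_assoc, hPHRA]
  have hPdPPd : Pd*(P*Pd) = Pd := by rw [← Matrix.mul_assoc, hP2]
  have hPdRA : Pd*((1 : Matrix m m (Quaternion ℝ)) - A*Ad) = Pd := by
    calc Pd*((1 : Matrix m m (Quaternion ℝ)) - A*Ad)
        = Pd*(P*Pd)*((1 : Matrix m m (Quaternion ℝ)) - A*Ad) := by rw [hPdPPd]
      _ = Pd*(P*Pd*((1 : Matrix m m (Quaternion ℝ)) - A*Ad)) := by
          rw [Matrix.mul_assoc]
      _ = Pd*(P*Pd) := by rw [hPPdRA]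
      _ = Pd := hPdPPd
  have hPdAAd : Pd*(A*Ad) = 0 := by
    have h := hPdRA
    rw [Matrix.mul_sub, Matrix.mul_one, sub_eq_self] at h
    exact h
  -- consequence of h1
  have hAAdE : A*Ad*E = E - P*(Pd*E) := by
    have key : (1 - P*Pd)*(1 - A*Ad)*E = E - A*Ad*E - P*(Pd*E) := by
      rw [Matrix.sub_mul (1 : Matrix m m (Quaternion ℝ)) (P*Pd), Matrix.one_mul,
        hPPdRA, Matrix.sub_mul, Matrix.sub_mul, Matrix.one_mul, ← Matrix.mul_assoc]
    have key2 : E - A*Ad*E - P*(Pd*E) = 0 := by rw [← key]; exact h1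
    have key3 : A*Ad*E - (E - P*(Pd*E)) = -(E - A*Ad*E - P*(Pd*E)) := by abel
    rw [← sub_eq_zero, key3, key2, neg_zero]
  -- consequence of h3
  have h3' : ((1 : Matrix m m (Quaternion ℝ)) - A*Ad)*(E*(Dd*D))
      = ((1 : Matrix m m (Quaternion ℝ)) - A*Ad)*E := by
    have h := h3
    rw [Matrix.mul_sub, Matrix.mul_one, Matrix.mul_assoc] at h
    exact (sub_eq_zero.mp h).symm
  have rPdEDdD : Pd*(E*(Dd*D)) = Pd*E := by
    calc Pd*(E*(Dd*D)) = Pd*((1 : Matrix m m (Quaternion ℝ)) - A*Ad)*(E*(Dd*D)) := by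
          rw [hPdRA]
      _ = Pd*(((1 : Matrix m m (Quaternion ℝ)) - A*Ad)*(E*(Dd*D))) := by
          rw [Matrix.mul_assoc]
      _ = Pd*(((1 : Matrix m m (Quaternion ℝ)) - A*Ad)*E) := by rw [h3']
      _ = Pd*((1 : Matrix m m (Quaternion ℝ)) - A*Ad)*E := by rw [Matrix.mul_assoc]
      _ = Pd*E := by rw [hPdRA]
  -- B / Q side
  have idemBdB : Bd*B*(Bd*B) = Bd*B := by
    rw [Matrix.mul_assoc, ← Matrix.mul_assoc B Bd B, hB1]
  have idemLB : ((1 : Matrix n n (Quaternion ℝ)) - Bd*B)*(1 - Bd*B) = 1 - Bd*B := by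
    rw [Matrix.sub_mul, Matrix.one_mul, Matrix.mul_sub, Matrix.mul_one, idemBdB]
    abel
  have hQLB : Q*((1 : Matrix n n (Quaternion ℝ)) - Bd*B) = Q := by
    rw [hQ, Matrix.mul_assoc, idemLB]
  have hLBH : ((1 : Matrix n n (Quaternion ℝ)) - Bd*B)ᴴ = 1 - Bd*B := by
    rw [Matrix.conjTranspose_sub, Matrix.conjTranspose_one, hB4]
  have hLBQH : ((1 : Matrix n n (Quaternion ℝ)) - Bd*B)*Qᴴ = Qᴴ := by
    calc ((1 : Matrix n n (Quaternion ℝ)) - Bd*B)*Qᴴ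
        = ((1 : Matrix n n (Quaternion ℝ)) - Bd*B)ᴴ*Qᴴ := by rw [hLBH]
      _ = (Q*((1 : Matrix n n (Quaternion ℝ)) - Bd*B))ᴴ := by
          rw [← Matrix.conjTranspose_mul]
      _ = Qᴴ := by rw [hQLB]
  have hQdQH : Qd*Q = Qᴴ*Qdᴴ := by rw [← Matrix.conjTranspose_mul, hQ4]
  have hLBQdQ : ((1 : Matrix n n (Quaternion ℝ)) - Bd*B)*(Qd*Q) = Qd*Q := by
    rw [hQdQH, ← Matrix.mul_assoc, hLBQH]
  have h2' : E*(1 - Bd*B)*(1 - Qd*Q) = E*(1 - Bd*B) - E*(Qd*Q) := by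
    rw [Matrix.mul_sub, Matrix.mul_one, Matrix.mul_assoc, hLBQdQ]
  have h2'' : E*(Qd*Q) = E*((1 : Matrix n n (Quaternion ℝ)) - Bd*B) := by
    have h := h2
    rw [h2'] at h
    exact (sub_eq_zero.mp h).symm
  have rEQdQ : E*(Qd*Q) = E - E*(Bd*B) := by
    rw [h2'', Matrix.mul_sub, Matrix.mul_one]
  -- consequence of h4
  have h4' : E*((1 : Matrix n n (Quaternion ℝ)) - Bd*B)
      = C*Cd*E*((1 : Matrix n n (Quaternion ℝ)) - Bd*B) := by
    have h := h4
    rw [Matrix.sub_mul (1 : Matrix m m (Quaternion ℝ)) (C*Cd), Matrix.one_mul,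
      Matrix.sub_mul, sub_eq_zero] at h
    exact h
  have hCCdF : C*(Cd*(E*((1 : Matrix n n (Quaternion ℝ)) - Bd*B)))
      = E*((1 : Matrix n n (Quaternion ℝ)) - Bd*B) := by
    rw [← Matrix.mul_assoc, ← Matrix.mul_assoc, ← h4']
  have hPCdF : P*(Cd*(E*((1 : Matrix n n (Quaternion ℝ)) - Bd*B)))
      = E*((1 : Matrix n n (Quaternion ℝ)) - Bd*B)
        - A*(Ad*(E*((1 : Matrix n n (Quaternion ℝ)) - Bd*B))) := by
    calc P*(Cd*(E*((1 : Matrix n n (Quaternion ℝ)) - Bd*B)))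
        = ((1 : Matrix m m (Quaternion ℝ)) - A*Ad)
            *(C*(Cd*(E*((1 : Matrix n n (Quaternion ℝ)) - Bd*B)))) := by
          rw [hP, Matrix.mul_assoc]
      _ = ((1 : Matrix m m (Quaternion ℝ)) - A*Ad)
            *(E*((1 : Matrix n n (Quaternion ℝ)) - Bd*B)) := by rw [hCCdF]
      _ = E*((1 : Matrix n n (Quaternion ℝ)) - Bd*B)
            - A*(Ad*(E*((1 : Matrix n n (Quaternion ℝ)) - Bd*B))) := by
          rw [Matrix.sub_mul, Matrix.one_mul, Matrix.mul_assoc]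
  have hPdAAdM : ∀ (M : Matrix n n (Quaternion ℝ)), Pd*(A*(Ad*(E*M))) = 0 := by
    intro M
    rw [← Matrix.mul_assoc A Ad, ← Matrix.mul_assoc Pd, hPdAAd, Matrix.zero_mul]
  have hSCdF : S*(Cd*(E*((1 : Matrix n n (Quaternion ℝ)) - Bd*B)))
      = E*((1 : Matrix n n (Quaternion ℝ)) - Bd*B)
        - C*(Pd*(E*((1 : Matrix n n (Quaternion ℝ)) - Bd*B))) := by
    calc S*(Cd*(E*((1 : Matrix n n (Quaternion ℝ)) - Bd*B)))
        = C*(((1 : Matrix c c (Quaternion ℝ)) - Pd*P)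
            *(Cd*(E*((1 : Matrix n n (Quaternion ℝ)) - Bd*B)))) := by
          rw [hS, Matrix.mul_assoc]
      _ = C*(Cd*(E*((1 : Matrix n n (Quaternion ℝ)) - Bd*B)))
            - C*(Pd*(P*(Cd*(E*((1 : Matrix n n (Quaternion ℝ)) - Bd*B))))) := by
          rw [Matrix.sub_mul, Matrix.one_mul, Matrix.mul_assoc (Pd) P, Matrix.mul_sub]
      _ = E*((1 : Matrix n n (Quaternion ℝ)) - Bd*B)
            - C*(Pd*(E*((1 : Matrix n n (Quaternion ℝ)) - Bd*B)
                - A*(Ad*(E*((1 : Matrix n n (Quaternion ℝ)) - Bd*B))))) := by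
          rw [hCCdF, hPCdF]
      _ = E*((1 : Matrix n n (Quaternion ℝ)) - Bd*B)
            - C*(Pd*(E*((1 : Matrix n n (Quaternion ℝ)) - Bd*B))) := by
          rw [Matrix.mul_sub Pd, hPdAAdM, sub_zero]
  have eKeyF : C*(Pd*(E*((1 : Matrix n n (Quaternion ℝ)) - Bd*B)))
      + S*(Cd*(E*((1 : Matrix n n (Quaternion ℝ)) - Bd*B)))
      = E*((1 : Matrix n n (Quaternion ℝ)) - Bd*B) := by
    rw [hSCdF]; abel
  have eKey : E = E*(Bd*B) - C*(Pd*(E*(Bd*B))) + S*(Cd*E) - S*(Cd*(E*(Bd*B)))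
      + C*(Pd*E) := by
    have h2b : E - (E*(Bd*B) - C*(Pd*(E*(Bd*B))) + S*(Cd*E) - S*(Cd*(E*(Bd*B)))
          + C*(Pd*E))
        = E*((1 : Matrix n n (Quaternion ℝ)) - Bd*B)
          - (C*(Pd*(E*((1 : Matrix n n (Quaternion ℝ)) - Bd*B)))
            + S*(Cd*(E*((1 : Matrix n n (Quaternion ℝ)) - Bd*B)))) := by
      simp only [Matrix.mul_sub, Matrix.mul_one]
      abel
    rw [eKeyF, sub_self] at h2b
    exact (sub_eq_zero.mp h2b)
  -- continuation rewrite rules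
  have rAAdA : ∀ (M : Matrix a n (Quaternion ℝ)),
      A*(Ad*(A*M)) = A*M := by
    intro M
    rw [← Matrix.mul_assoc, ← Matrix.mul_assoc, hA1]
  have rAAdE : ∀ (M : Matrix n n (Quaternion ℝ)),
      A*(Ad*(E*M)) = E*M - P*(Pd*(E*M)) := by
    intro M
    rw [← Matrix.mul_assoc, ← Matrix.mul_assoc, hAAdE, Matrix.sub_mul]
    simp only [Matrix.mul_assoc]
  have rAAdC : ∀ (M : Matrix c n (Quaternion ℝ)),
      A*(Ad*(C*M)) = C*M - P*M := by
    intro M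
    rw [← Matrix.mul_assoc, ← Matrix.mul_assoc, hAAdC, Matrix.sub_mul]
  have rAAdS : ∀ (M : Matrix c n (Quaternion ℝ)),
      A*(Ad*(S*M)) = S*M := by
    intro M
    rw [← Matrix.mul_assoc, ← Matrix.mul_assoc, hAAdS]
  have rSSdS : ∀ (M : Matrix c n (Quaternion ℝ)),
      S*(Sd*(S*M)) = S*M := by
    intro M
    rw [← Matrix.mul_assoc, ← Matrix.mul_assoc, hS1]
  have rCSdS : ∀ (M : Matrix c n (Quaternion ℝ)),
      C*(Sd*(S*M)) = S*M := by
    intro M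
    rw [← Matrix.mul_assoc, ← Matrix.mul_assoc, hCSdS]
  have rCPdP : ∀ (M : Matrix c n (Quaternion ℝ)),
      C*(Pd*(P*M)) = C*M - S*M := by
    intro M
    rw [← Matrix.mul_assoc, ← Matrix.mul_assoc, hCPdP, Matrix.sub_mul]
  have rBBdB : B*(Bd*B) = B := by rw [← Matrix.mul_assoc, hB1]
  have rDDdD : D*(Dd*D) = D := by rw [← Matrix.mul_assoc, hD1]
  have rQQdQ : Q*(Qd*Q) = Q := by rw [← Matrix.mul_assoc, hQ1]
  have rDBdB : D*(Bd*B) = D - Q := by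
    rw [hQ, Matrix.mul_sub, Matrix.mul_one]; abel
  -- main computation
  rw [hX, hY]
  simp only [Matrix.mul_sub, Matrix.sub_mul, Matrix.mul_add, Matrix.add_mul,
    Matrix.mul_one, Matrix.one_mul, Matrix.mul_assoc, rAAdA, rAAdE, rAAdC, rAAdS,
    rSSdS, rCSdS, rCPdP, rBBdB, rDDdD, rQQdQ, rDBdB, rEQdQ, rPdEDdD]
  conv_rhs => rw [eKey]
  abel
end

section
/- Let A ∈ ℍ^{m×a}, B ∈ ℍ^{b×n}, C ∈ ℍ^{m×c}, D ∈ ℍ^{d×n}, E ∈ ℍ^{m×n} be quaternion matrices and set P = R_A C, Q = D L_B, S = C L_P. If (X, Y) with X ∈ ℍ^{a×b}, Y ∈ ℍ^{c×d} is any solution of A X B + C Y D = E, then there exist quaternion matrices U₁, U₂, U₃, U₄, U₅ of the appropriate sizes such that X = A† E B† − A† C P† E B† − A† S C† E Q† D B† − A† S U₂ R_Q D B† + L_A U₄ + U₅ R_B and Y = P† E D† + S† S C† E Q† + L_P L_S U₁ + L_P U₂ R_Q + U₃ R_D. -/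
open Matrix

section Aux

open Matrix

private theorem mulZ {l m n k : Type*} [Fintype m] [Fintype n]
    {M : Matrix l m (Quaternion ℝ)} {N : Matrix m n (Quaternion ℝ)}
    (h : M * N = 0) (Z : Matrix n k (Quaternion ℝ)) :
    M * (N * Z) = 0 := by
  rw [← Matrix.mul_assoc, h, Matrix.zero_mul]

private theorem mulE {l m m' n k : Type*} [Fintype m] [Fintype m'] [Fintype n]
    {M : Matrix l m (Quaternion ℝ)} {N : Matrix m n (Quaternion ℝ)}
    {M' : Matrix l m' (Quaternion ℝ)} {N' : Matrix m' n (Quaternion ℝ)}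
    (h : M * N = M' * N') (Z : Matrix n k (Quaternion ℝ)) :
    M * (N * Z) = M' * (N' * Z) := by
  rw [← Matrix.mul_assoc, h, Matrix.mul_assoc]

private theorem mul3 {l m n p k : Type*} [Fintype m] [Fintype n] [Fintype p]
    {M : Matrix l m (Quaternion ℝ)} {N : Matrix m n (Quaternion ℝ)}
    {L : Matrix n p (Quaternion ℝ)} {R : Matrix l p (Quaternion ℝ)}
    (h : M * N * L = R) (Z : Matrix p k (Quaternion ℝ)) :
    M * (N * (L * Z)) = R * Z := by
  have h2 : M * N * L * Z = R * Z := by rw [h]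
  simpa only [Matrix.mul_assoc] using h2

private theorem IsMP.conj {m n : Type*} [Fintype m] [Fintype n]
    {A : Matrix m n (Quaternion ℝ)} {X : Matrix n m (Quaternion ℝ)}
    (h : IsMP A X) : IsMP Aᴴ Xᴴ := by
  obtain ⟨h1, h2, h3, h4⟩ := h
  refine ⟨?_, ?_, ?_, ?_⟩
  · have := congrArg Matrix.conjTranspose h1
    simpa only [Matrix.conjTranspose_mul, Matrix.mul_assoc] using this
  · have := congrArg Matrix.conjTranspose h2
    simpa only [Matrix.conjTranspose_mul, Matrix.mul_assoc] using this
  · have e : Aᴴ * Xᴴ = (X * A)ᴴ := (Matrix.conjTranspose_mul X A).symm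
    rw [e, Matrix.conjTranspose_conjTranspose, h4]
  · have e : Xᴴ * Aᴴ = (A * X)ᴴ := (Matrix.conjTranspose_mul A X).symm
    rw [e, Matrix.conjTranspose_conjTranspose, h3]

/-- If `P = (1 - A A†) C` then `P† A = 0`. -/
private theorem pd_mul_A {m a c : Type*} [Fintype m] [Fintype a] [Fintype c]
    [DecidableEq m]
    (A : Matrix m a (Quaternion ℝ)) (Ad : Matrix a m (Quaternion ℝ))
    (C : Matrix m c (Quaternion ℝ))
    (P : Matrix m c (Quaternion ℝ)) (Pd : Matrix c m (Quaternion ℝ))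
    (hA : IsMP A Ad) (hP : P = (1 - A * Ad) * C) (hPd : IsMP P Pd) :
    Pd * A = 0 := by
  have hPA : Pᴴ * A = 0 := by
    rw [hP, Matrix.conjTranspose_mul, Matrix.conjTranspose_sub,
      Matrix.conjTranspose_one, hA.2.2.1, Matrix.mul_assoc, Matrix.sub_mul,
      Matrix.one_mul, hA.1, sub_self, Matrix.mul_zero]
  have h1 : Pd = Pd * (Pdᴴ * Pᴴ) := by
    conv_lhs => rw [← hPd.2.1]
    rw [Matrix.mul_assoc, ← hPd.2.2.1, Matrix.conjTranspose_mul]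
  conv_lhs => rw [h1]
  rw [Matrix.mul_assoc, Matrix.mul_assoc, hPA, Matrix.mul_zero, Matrix.mul_zero]

end Aux

/-- With `P = R_A C`, `Q = D L_B`, `S = C L_P`, every solution `(X, Y)` of
`A X B + C Y D = E` has the displayed parametric form for some `U₁, …, U₅`. -/
theorem axb_plus_cyd_solution_form {m a b n c d : Type*}
    [Fintype m] [Fintype a] [Fintype b] [Fintype n] [Fintype c] [Fintype d]
    [DecidableEq m] [DecidableEq n] [DecidableEq a] [DecidableEq b]
    [DecidableEq c] [DecidableEq d]
    (A : Matrix m a (Quaternion ℝ)) (B : Matrix b n (Quaternion ℝ))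
    (C : Matrix m c (Quaternion ℝ)) (D : Matrix d n (Quaternion ℝ))
    (E : Matrix m n (Quaternion ℝ))
    (Ad : Matrix a m (Quaternion ℝ)) (Bd : Matrix n b (Quaternion ℝ))
    (Cd : Matrix c m (Quaternion ℝ)) (Dd : Matrix n d (Quaternion ℝ))
    (hA : IsMP A Ad) (hB : IsMP B Bd) (hC : IsMP C Cd) (hD : IsMP D Dd)
    (P : Matrix m c (Quaternion ℝ)) (Q : Matrix d n (Quaternion ℝ))
    (hP : P = (1 - A * Ad) * C) (hQ : Q = D * (1 - Bd * B))
    (Pd : Matrix c m (Quaternion ℝ)) (Qd : Matrix n d (Quaternion ℝ))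
    (hPd : IsMP P Pd) (hQd : IsMP Q Qd)
    (S : Matrix m c (Quaternion ℝ)) (hS : S = C * (1 - Pd * P))
    (Sd : Matrix c m (Quaternion ℝ)) (hSd : IsMP S Sd)
    (X : Matrix a b (Quaternion ℝ)) (Y : Matrix c d (Quaternion ℝ))
    (hXY : A * X * B + C * Y * D = E) :
    ∃ (U₁ U₂ U₃ : Matrix c d (Quaternion ℝ)) (U₄ U₅ : Matrix a b (Quaternion ℝ)),
      X = Ad * E * Bd - Ad * C * Pd * E * Bd - Ad * S * Cd * E * Qd * D * Bd
          - Ad * S * U₂ * (1 - Q * Qd) * D * Bd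
          + (1 - Ad * A) * U₄ + U₅ * (1 - B * Bd) ∧
      Y = Pd * E * Dd + Sd * S * Cd * E * Qd + (1 - Pd * P) * (1 - Sd * S) * U₁
          + (1 - Pd * P) * U₂ * (1 - Q * Qd) + U₃ * (1 - D * Dd) := by
  have hPdA : Pd * A = 0 := pd_mul_A A Ad C P Pd hA hP hPd
  have hQH : Qᴴ = (1 - Bᴴ * Bdᴴ) * Dᴴ := by
    rw [hQ, Matrix.conjTranspose_mul, Matrix.conjTranspose_sub, Matrix.conjTranspose_one,
      hB.2.2.2, ← Matrix.conjTranspose_mul, hB.2.2.2]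
  have hBQd : B * Qd = 0 := by
    have h0 : Qdᴴ * Bᴴ = 0 := pd_mul_A Bᴴ Bdᴴ Dᴴ Qᴴ Qdᴴ hB.conj hQH hQd.conj
    have h1 : (B * Qd)ᴴ = 0 := by rw [Matrix.conjTranspose_mul, h0]
    simpa using congrArg Matrix.conjTranspose h1
  have hSH : Sᴴ = (1 - Pᴴ * Pdᴴ) * Cᴴ := by
    rw [hS, Matrix.conjTranspose_mul, Matrix.conjTranspose_sub, Matrix.conjTranspose_one,
      hPd.2.2.2, ← Matrix.conjTranspose_mul, hPd.2.2.2]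
  have hPSd : P * Sd = 0 := by
    have h0 : Sdᴴ * Pᴴ = 0 := pd_mul_A Pᴴ Pdᴴ Cᴴ Sᴴ Sdᴴ hPd.conj hSH hSd.conj
    have h1 : (P * Sd)ᴴ = 0 := by rw [Matrix.conjTranspose_mul, h0]
    simpa using congrArg Matrix.conjTranspose h1
  have hPdC : Pd * C = Pd * P := by
    rw [hP, Matrix.sub_mul, Matrix.one_mul, Matrix.mul_sub, Matrix.mul_assoc A Ad C,
      ← Matrix.mul_assoc Pd A (Ad * C), hPdA, Matrix.zero_mul, sub_zero]
  have hDQd : D * Qd = Q * Qd := by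
    rw [hQ, Matrix.mul_assoc, Matrix.sub_mul, Matrix.one_mul, Matrix.mul_assoc Bd B Qd,
      hBQd, Matrix.mul_zero, sub_zero]
  have hPCdC : P * Cd * C = P := by
    rw [hP, Matrix.mul_assoc, Matrix.mul_assoc, ← Matrix.mul_assoc C Cd C, hC.1]
  refine ⟨Y * Q * Qd, Y, Pd * P * Y, X, Ad * (A * X), ?_, ?_⟩ <;>
  · rw [← hXY]
    simp only [hS, Matrix.mul_add, Matrix.add_mul, Matrix.mul_sub, Matrix.sub_mul,
      Matrix.mul_one, Matrix.one_mul, Matrix.mul_assoc,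
      mulZ hPdA, mulZ hBQd, hBQd, mulZ hPSd, hPSd,
      mulE hPdC, hPdC, mulE hDQd, hDQd,
      mul3 hC.1, mul3 hPCdC,
      Matrix.mul_zero, Matrix.zero_mul, add_zero, zero_add, sub_zero, zero_sub]
    abel
end

section
/- Let A ∈ ℍ^{m×k}, B ∈ ℍ^{o×n}, C ∈ ℍ^{m×p}, D ∈ ℍ^{r×n}, F ∈ ℍ^{m×l}, G ∈ ℍ^{s×n}, E ∈ ℍ^{m×n} be quaternion matrices, and set A₀ = R_A C, B₀ = D L_B, C₀ = R_A F, D₀ = G L_B, E₀ = R_A E L_B, M = R_{A₀} C₀, N = D₀ L_{B₀}, S = C₀ L_M. The equation A X + Y B + C Z D + F W G = E has a solution (X, Y, Z, W) with X ∈ ℍ^{k×n}, Y ∈ ℍ^{m×o}, Z ∈ ℍ^{p×r}, W ∈ ℍ^{l×s} if and only if R_M R_{A₀} E₀ = 0, E₀ L_{B₀} L_N = 0, R_{A₀} E₀ L_{D₀} = 0 and R_{C₀} E₀ L_{B₀} = 0. -/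
open Matrix

local notation "Q" => Quaternion ℝ

theorem reassoc_of' {α β γ δ : Type*} [Fintype α] [Fintype β] [Fintype γ] [Fintype δ]
    {X : Matrix α β Q} {Y : Matrix β γ Q} {W : Matrix α γ Q} (h : X * Y = W)
    (Z : Matrix γ δ Q) : X * (Y * Z) = W * Z := by
  rw [← Matrix.mul_assoc, h]

theorem mp_left {α β : Type*} [Fintype α] [Fintype β] [DecidableEq α]
    {A : Matrix α β Q} {X : Matrix β α Q}
    (h : A * X * A = A) : (1 - A * X) * A = 0 := by
  rw [Matrix.sub_mul, Matrix.one_mul, h, sub_self]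

theorem mp_right {α β : Type*} [Fintype α] [Fintype β] [DecidableEq β]
    {A : Matrix α β Q} {X : Matrix β α Q}
    (h : A * X * A = A) : A * (1 - X * A) = 0 := by
  rw [Matrix.mul_sub, Matrix.mul_one, ← Matrix.mul_assoc, h, sub_self]

/-- Sufficiency for the two-sided pair equation `A₀ Z B₀ + C₀ W D₀ = E₀`. -/
theorem pair_solvable {m n p r l s : Type*}
    [Fintype m] [Fintype n] [Fintype p] [Fintype r] [Fintype l] [Fintype s]
    [DecidableEq m] [DecidableEq n] [DecidableEq p] [DecidableEq r]
    [DecidableEq l] [DecidableEq s]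
    (A₀ : Matrix m p Q) (B₀ : Matrix r n Q) (C₀ : Matrix m l Q) (D₀ : Matrix s n Q)
    (E₀ : Matrix m n Q)
    (A₀d : Matrix p m Q) (B₀d : Matrix n r Q) (C₀d : Matrix l m Q) (D₀d : Matrix n s Q)
    (hA₀d : IsMP A₀ A₀d) (hB₀d : IsMP B₀ B₀d) (hC₀d : IsMP C₀ C₀d) (hD₀d : IsMP D₀ D₀d)
    (M : Matrix m l Q) (N : Matrix s n Q)
    (hM : M = (1 - A₀ * A₀d) * C₀) (hN : N = D₀ * (1 - B₀d * B₀))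
    (Md : Matrix l m Q) (Nd : Matrix n s Q)
    (hMd : IsMP M Md) (hNd : IsMP N Nd)
    (h1 : (1 - M * Md) * (1 - A₀ * A₀d) * E₀ = 0)
    (h2 : E₀ * (1 - B₀d * B₀) * (1 - Nd * N) = 0)
    (h3 : (1 - A₀ * A₀d) * E₀ * (1 - D₀d * D₀) = 0)
    (h4 : (1 - C₀ * C₀d) * E₀ * (1 - B₀d * B₀) = 0) :
    ∃ (Z : Matrix p r Q) (W : Matrix l s Q),
      A₀ * (Z * B₀) + C₀ * (W * D₀) = E₀ := by
  have pA₀ : (1 - A₀ * A₀d) * A₀ = 0 := mp_left hA₀d.1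
  have pB₀ : B₀ * (1 - B₀d * B₀) = 0 := mp_right hB₀d.1
  have pM : M * (1 - Md * M) = 0 := mp_right hMd.1
  -- Hermitian facts
  have hMH : Mᴴ * (A₀ * A₀d) = 0 := by
    have e1 : ((1 - A₀ * A₀d) * C₀)ᴴ = C₀ᴴ * (1 - A₀ * A₀d) := by
      rw [conjTranspose_mul, conjTranspose_sub, conjTranspose_one, hA₀d.2.2.1]
    have e2 : (1 - A₀ * A₀d) * (A₀ * A₀d) = 0 := by
      rw [reassoc_of' pA₀, Matrix.zero_mul]
    rw [hM, e1, Matrix.mul_assoc, e2, Matrix.mul_zero]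
  have hMdMH : Md * (Mdᴴ * Mᴴ) = Md := by
    rw [← conjTranspose_mul, hMd.2.2.1, ← Matrix.mul_assoc, hMd.2.1]
  have fMd : Md * (A₀ * A₀d) = 0 := by
    calc Md * (A₀ * A₀d) = (Md * (Mdᴴ * Mᴴ)) * (A₀ * A₀d) := by rw [hMdMH]
      _ = Md * (Mdᴴ * (Mᴴ * (A₀ * A₀d))) := by rw [Matrix.mul_assoc, Matrix.mul_assoc]
      _ = 0 := by rw [hMH, Matrix.mul_zero, Matrix.mul_zero]
  have fMMd : (M * Md) * (A₀ * A₀d) = 0 := by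
    have hMMdH : Mdᴴ * Mᴴ = M * Md := by rw [← conjTranspose_mul, hMd.2.2.1]
    rw [← hMMdH, Matrix.mul_assoc, hMH, Matrix.mul_zero]
  have hNH : (B₀d * B₀) * Nᴴ = 0 := by
    have e1 : Nᴴ = (1 - B₀d * B₀) * D₀ᴴ := by
      rw [hN, conjTranspose_mul, conjTranspose_sub, conjTranspose_one, hB₀d.2.2.2]
    have e2 : (B₀d * B₀) * (1 - B₀d * B₀) = 0 := by
      rw [Matrix.mul_assoc, pB₀, Matrix.mul_zero]
    rw [e1, ← Matrix.mul_assoc, e2, Matrix.zero_mul]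
  have hNdH : (Nᴴ * Ndᴴ) * Nd = Nd := by
    rw [← conjTranspose_mul, hNd.2.2.2, hNd.2.1]
  have fNd : (B₀d * B₀) * Nd = 0 := by
    calc (B₀d * B₀) * Nd = (B₀d * B₀) * ((Nᴴ * Ndᴴ) * Nd) := by rw [hNdH]
      _ = (((B₀d * B₀) * Nᴴ) * Ndᴴ) * Nd := by rw [← Matrix.mul_assoc, ← Matrix.mul_assoc]
      _ = 0 := by rw [hNH, Matrix.zero_mul, Matrix.zero_mul]
  -- consequences of the four conditions
  have K1 : (1 - A₀ * A₀d) * E₀ = (M * Md) * E₀ := by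
    rw [Matrix.mul_assoc, Matrix.sub_mul, Matrix.one_mul, sub_eq_zero] at h1
    rw [h1, Matrix.sub_mul, Matrix.one_mul, Matrix.mul_sub,
      ← Matrix.mul_assoc (M * Md) (A₀ * A₀d) E₀, fMMd, Matrix.zero_mul, sub_zero]
  have K3a : (M * Md) * E₀ = ((M * Md) * E₀) * (D₀d * D₀) := by
    rw [K1] at h3
    rw [Matrix.mul_sub, Matrix.mul_one, sub_eq_zero] at h3
    exact h3
  have hMdE : Md * E₀ = Md * ((1 - A₀ * A₀d) * E₀) := by
    rw [Matrix.sub_mul, Matrix.one_mul, Matrix.mul_sub,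
      ← Matrix.mul_assoc Md (A₀ * A₀d) E₀, fMd, Matrix.zero_mul, sub_zero]
  have K3b : Md * E₀ = (Md * E₀) * (D₀d * D₀) := by
    calc Md * E₀ = Md * ((M * Md) * E₀) := by rw [hMdE, K1]
      _ = Md * (((M * Md) * E₀) * (D₀d * D₀)) := by rw [← K3a]
      _ = (Md * ((M * Md) * E₀)) * (D₀d * D₀) := by rw [← Matrix.mul_assoc]
      _ = (Md * E₀) * (D₀d * D₀) := by rw [← K1, ← hMdE]
  have fNdN : (1 - B₀d * B₀) * (Nd * N) = Nd * N := by
    rw [Matrix.sub_mul, Matrix.one_mul, ← Matrix.mul_assoc, fNd, Matrix.zero_mul, sub_zero]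
  have K2 : E₀ * (1 - B₀d * B₀) = E₀ * (Nd * N) := by
    rw [Matrix.mul_sub, Matrix.mul_one, sub_eq_zero] at h2
    rw [h2, Matrix.mul_assoc, fNdN]
  have K4 : (C₀ * C₀d) * (E₀ * (1 - B₀d * B₀)) = E₀ * (1 - B₀d * B₀) := by
    rw [Matrix.mul_assoc, Matrix.sub_mul, Matrix.one_mul, sub_eq_zero] at h4
    exact h4.symm
  have fMdC : Md * M = Md * C₀ := by
    rw [hM, Matrix.sub_mul, Matrix.one_mul, Matrix.mul_sub,
      ← Matrix.mul_assoc Md (A₀ * A₀d) C₀, fMd, Matrix.zero_mul, sub_zero]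
  -- the particular solution
  set W₀ : Matrix l s Q := (Md * E₀) * D₀d + (1 - Md * M) * (C₀d * (E₀ * Nd)) with hW₀
  set T : Matrix m n Q := E₀ - C₀ * (W₀ * D₀) with hT
  set Z₀ : Matrix p r Q := A₀d * (T * B₀d) with hZ₀
  have hMW : M * W₀ = ((M * Md) * E₀) * D₀d := by
    rw [hW₀, Matrix.mul_add, ← Matrix.mul_assoc M (1 - Md * M) _, pM, Matrix.zero_mul,
      add_zero, ← Matrix.mul_assoc, ← Matrix.mul_assoc]
  have stepA : (1 - A₀ * A₀d) * T = 0 := by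
    rw [hT, Matrix.mul_sub, K1, ← Matrix.mul_assoc (1 - A₀ * A₀d) C₀ (W₀ * D₀), ← hM,
      ← Matrix.mul_assoc M W₀ D₀, hMW, Matrix.mul_assoc ((M * Md) * E₀) D₀d D₀, ← K3a,
      sub_self]
  have hP : (C₀d * (E₀ * Nd)) * N = C₀d * (E₀ * (Nd * N)) := by
    rw [Matrix.mul_assoc, Matrix.mul_assoc]
  have tA : ((Md * E₀) * D₀d) * N = Md * (E₀ * (Nd * N)) := by
    calc ((Md * E₀) * D₀d) * N = (Md * E₀) * (D₀d * (D₀ * (1 - B₀d * B₀))) := by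
          rw [Matrix.mul_assoc, hN]
      _ = ((Md * E₀) * (D₀d * D₀)) * (1 - B₀d * B₀) := by
          rw [← Matrix.mul_assoc D₀d D₀ _, ← Matrix.mul_assoc]
      _ = (Md * E₀) * (1 - B₀d * B₀) := by rw [← K3b]
      _ = Md * (E₀ * (Nd * N)) := by rw [Matrix.mul_assoc, K2]
  have hX2 : C₀ * (C₀d * (E₀ * (Nd * N))) = E₀ * (Nd * N) := by
    rw [← K2, ← Matrix.mul_assoc, K4]
  have hMdMX : (Md * M) * (C₀d * (E₀ * (Nd * N))) = Md * (E₀ * (Nd * N)) := by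
    rw [fMdC, Matrix.mul_assoc, hX2]
  have hWN : C₀ * (W₀ * N) = E₀ * (1 - B₀d * B₀) := by
    rw [hW₀, Matrix.add_mul, tA, Matrix.mul_assoc (1 - Md * M) _ N, hP,
      Matrix.sub_mul, Matrix.one_mul, hMdMX, Matrix.mul_add, Matrix.mul_sub, hX2, ← K2]
    abel
  have stepB : T * (1 - B₀d * B₀) = 0 := by
    rw [hT, Matrix.sub_mul, Matrix.mul_assoc, Matrix.mul_assoc, ← hN, hWN, sub_self]
  have hAT : (A₀ * A₀d) * T = T := by
    rw [Matrix.sub_mul, Matrix.one_mul, sub_eq_zero] at stepA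
    exact stepA.symm
  have hTB : T * (B₀d * B₀) = T := by
    rw [Matrix.mul_sub, Matrix.mul_one, sub_eq_zero] at stepB
    exact stepB.symm
  refine ⟨Z₀, W₀, ?_⟩
  rw [hZ₀, Matrix.mul_assoc A₀d (T * B₀d) B₀, Matrix.mul_assoc T B₀d B₀, hTB,
    ← Matrix.mul_assoc A₀ A₀d T, hAT, hT]
  abel

/-- Solvability criterion for `A X + Y B + C Z D + F W G = E` in terms of the derived
matrices `A₀ = R_A C`, `B₀ = D L_B`, `C₀ = R_A F`, `D₀ = G L_B`, `E₀ = R_A E L_B`,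
`M = R_{A₀} C₀`, `N = D₀ L_{B₀}`, `S = C₀ L_M`. -/
theorem four_term_solvable_iff {m k o n p r l s : Type*}
    [Fintype m] [Fintype k] [Fintype o] [Fintype n] [Fintype p] [Fintype r]
    [Fintype l] [Fintype s]
    [DecidableEq m] [DecidableEq n] [DecidableEq p] [DecidableEq r]
    [DecidableEq l] [DecidableEq s]
    (A : Matrix m k (Quaternion ℝ)) (B : Matrix o n (Quaternion ℝ))
    (C : Matrix m p (Quaternion ℝ)) (D : Matrix r n (Quaternion ℝ))
    (F : Matrix m l (Quaternion ℝ)) (G : Matrix s n (Quaternion ℝ))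
    (E : Matrix m n (Quaternion ℝ))
    (Ad : Matrix k m (Quaternion ℝ)) (Bd : Matrix n o (Quaternion ℝ))
    (hA : IsMP A Ad) (hB : IsMP B Bd)
    (A₀ : Matrix m p (Quaternion ℝ)) (B₀ : Matrix r n (Quaternion ℝ))
    (C₀ : Matrix m l (Quaternion ℝ)) (D₀ : Matrix s n (Quaternion ℝ))
    (E₀ : Matrix m n (Quaternion ℝ))
    (hA₀ : A₀ = (1 - A * Ad) * C) (hB₀ : B₀ = D * (1 - Bd * B))
    (hC₀ : C₀ = (1 - A * Ad) * F) (hD₀ : D₀ = G * (1 - Bd * B))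
    (hE₀ : E₀ = (1 - A * Ad) * E * (1 - Bd * B))
    (A₀d : Matrix p m (Quaternion ℝ)) (B₀d : Matrix n r (Quaternion ℝ))
    (C₀d : Matrix l m (Quaternion ℝ)) (D₀d : Matrix n s (Quaternion ℝ))
    (hA₀d : IsMP A₀ A₀d) (hB₀d : IsMP B₀ B₀d)
    (hC₀d : IsMP C₀ C₀d) (hD₀d : IsMP D₀ D₀d)
    (M : Matrix m l (Quaternion ℝ)) (N : Matrix s n (Quaternion ℝ))
    (hM : M = (1 - A₀ * A₀d) * C₀) (hN : N = D₀ * (1 - B₀d * B₀))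
    (Md : Matrix l m (Quaternion ℝ)) (Nd : Matrix n s (Quaternion ℝ))
    (hMd : IsMP M Md) (hNd : IsMP N Nd)
    (S : Matrix m l (Quaternion ℝ)) (hS : S = C₀ * (1 - Md * M)) :
    (∃ (X : Matrix k n (Quaternion ℝ)) (Y : Matrix m o (Quaternion ℝ))
        (Z : Matrix p r (Quaternion ℝ)) (W : Matrix l s (Quaternion ℝ)),
        A * X + Y * B + C * Z * D + F * W * G = E) ↔
      (1 - M * Md) * (1 - A₀ * A₀d) * E₀ = 0 ∧
      E₀ * (1 - B₀d * B₀) * (1 - Nd * N) = 0 ∧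
      (1 - A₀ * A₀d) * E₀ * (1 - D₀d * D₀) = 0 ∧
      (1 - C₀ * C₀d) * E₀ * (1 - B₀d * B₀) = 0 := by
  have pA : (1 - A * Ad) * A = 0 := mp_left hA.1
  have pB : B * (1 - Bd * B) = 0 := mp_right hB.1
  constructor
  · rintro ⟨X, Y, Z, W, hXYZW⟩
    have key : A₀ * (Z * B₀) + C₀ * (W * D₀) = E₀ := by
      rw [hE₀, ← hXYZW, hA₀, hB₀, hC₀, hD₀]
      simp only [Matrix.add_mul, Matrix.mul_add, Matrix.mul_assoc, reassoc_of' pA, pB,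
        Matrix.zero_mul, Matrix.mul_zero, add_zero, zero_add]
    have pA₀ : (1 - A₀ * A₀d) * A₀ = 0 := mp_left hA₀d.1
    have pB₀ : B₀ * (1 - B₀d * B₀) = 0 := mp_right hB₀d.1
    have pC₀ : (1 - C₀ * C₀d) * C₀ = 0 := mp_left hC₀d.1
    have pD₀ : D₀ * (1 - D₀d * D₀) = 0 := mp_right hD₀d.1
    have pMl : (1 - M * Md) * M = 0 := mp_left hMd.1
    have pN : N * (1 - Nd * N) = 0 := mp_right hNd.1
    refine ⟨?_, ?_, ?_, ?_⟩ <;> rw [← key]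
    · simp only [Matrix.mul_add, Matrix.mul_assoc, reassoc_of' pA₀, reassoc_of' hM.symm,
        reassoc_of' pMl, Matrix.zero_mul, Matrix.mul_zero, add_zero, zero_add]
    · simp only [Matrix.add_mul, Matrix.mul_assoc, reassoc_of' pB₀, reassoc_of' hN.symm,
        pN, Matrix.zero_mul, Matrix.mul_zero, add_zero, zero_add]
    · simp only [Matrix.mul_add, Matrix.add_mul, Matrix.mul_assoc, reassoc_of' pA₀, pD₀,
        Matrix.zero_mul, Matrix.mul_zero, add_zero, zero_add]
    · simp only [Matrix.mul_add, Matrix.add_mul, Matrix.mul_assoc, reassoc_of' pC₀, pB₀,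
        Matrix.zero_mul, Matrix.mul_zero, add_zero, zero_add]
  · rintro ⟨h1, h2, h3, h4⟩
    obtain ⟨Z, W, hZW⟩ := pair_solvable A₀ B₀ C₀ D₀ E₀ A₀d B₀d C₀d D₀d
      hA₀d hB₀d hC₀d hD₀d M N hM hN Md Nd hMd hNd h1 h2 h3 h4
    set E' : Matrix m n Q := E - C * (Z * D) - F * (W * G) with hE'
    refine ⟨Ad * E', (1 - A * Ad) * (E' * Bd), Z, W, ?_⟩
    have hkey : (1 - A * Ad) * (E' * (1 - Bd * B)) = 0 := by
      rw [hE', Matrix.sub_mul (E - C * (Z * D)) (F * (W * G)) (1 - Bd * B),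
        Matrix.sub_mul E (C * (Z * D)) (1 - Bd * B),
        Matrix.mul_sub (1 - A * Ad), Matrix.mul_sub (1 - A * Ad),
        Matrix.mul_assoc C (Z * D) (1 - Bd * B), Matrix.mul_assoc Z D (1 - Bd * B),
        Matrix.mul_assoc F (W * G) (1 - Bd * B), Matrix.mul_assoc W G (1 - Bd * B),
        ← hB₀, ← hD₀, reassoc_of' hA₀.symm (Z * B₀), reassoc_of' hC₀.symm (W * D₀),
        ← Matrix.mul_assoc (1 - A * Ad) E (1 - Bd * B), ← hE₀, ← hZW]
      abel
    have h5 : (1 - A * Ad) * (E' * (Bd * B)) = (1 - A * Ad) * E' := by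
      rw [Matrix.mul_sub, Matrix.mul_one, Matrix.mul_sub, sub_eq_zero] at hkey
      exact hkey.symm
    rw [Matrix.mul_assoc (1 - A * Ad) (E' * Bd) B, Matrix.mul_assoc E' Bd B, h5,
      Matrix.sub_mul, Matrix.one_mul, Matrix.mul_assoc A Ad E', hE',
      Matrix.mul_assoc C Z D, Matrix.mul_assoc F W G]
    abel
end

section
/- Let A ∈ ℍ^{m×k}, B ∈ ℍ^{o×n}, C ∈ ℍ^{m×p}, D ∈ ℍ^{r×n}, F ∈ ℍ^{m×l}, G ∈ ℍ^{s×n}, E ∈ ℍ^{m×n} be quaternion matrices, set A₀ = R_A C, B₀ = D L_B, C₀ = R_A F, D₀ = G L_B, E₀ = R_A E L_B, M = R_{A₀} C₀, N = D₀ L_{B₀}, S = C₀ L_M, and assume R_M R_{A₀} E₀ = 0, E₀ L_{B₀} L_N = 0, R_{A₀} E₀ L_{D₀} = 0 and R_{C₀} E₀ L_{B₀} = 0. Then for arbitrary quaternion matrices T₁, …, T₈ of the appropriate sizes, the tuple (X, Y, Z, W) defined by Z = A₀† E₀ B₀† − A₀† C₀ M† E₀ B₀† − A₀† S C₀† E₀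 N† D₀ B₀† − A₀† S T₄ R_N D₀ B₀† + L_{A₀} T₅ + T₆ R_{B₀}, W = M† E₀ D₀† + S† S C₀† E₀ N† + L_M L_S T₇ + L_M T₄ R_N + T₈ R_{D₀}, X = A† (E − C Z D − F W G) − T₁ B + L_A T₂, and Y = R_A (E − C Z D − F W G) B† + A T₁ + T₃ R_B satisfies A X + Y B + C Z D + F W G = E. -/
open Matrix

set_option maxHeartbeats 2000000 in
private lemma aux {m n p r l s : Type*}
    [Fintype m] [Fintype n] [Fintype p] [Fintype r] [Fintype l] [Fintype s]
    [DecidableEq m] [DecidableEq n] [DecidableEq p] [DecidableEq r]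
    [DecidableEq l] [DecidableEq s]
    (A : Matrix m p (Quaternion ℝ)) (B : Matrix r n (Quaternion ℝ))
    (C : Matrix m l (Quaternion ℝ)) (D : Matrix s n (Quaternion ℝ))
    (E : Matrix m n (Quaternion ℝ))
    (Ad : Matrix p m (Quaternion ℝ)) (Bd : Matrix n r (Quaternion ℝ))
    (Cd : Matrix l m (Quaternion ℝ)) (Dd : Matrix n s (Quaternion ℝ))
    (hA : IsMP A Ad) (hB : IsMP B Bd) (hC : IsMP C Cd) (hD : IsMP D Dd)
    (M : Matrix m l (Quaternion ℝ)) (N : Matrix s n (Quaternion ℝ))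
    (hM : M = (1 - A * Ad) * C) (hN : N = D * (1 - Bd * B))
    (Md : Matrix l m (Quaternion ℝ)) (Nd : Matrix n s (Quaternion ℝ))
    (hMd : IsMP M Md) (hNd : IsMP N Nd)
    (S : Matrix m l (Quaternion ℝ)) (hS : S = C * (1 - Md * M))
    (Sd : Matrix l m (Quaternion ℝ)) (hSd : IsMP S Sd)
    (h1 : (1 - M * Md) * (1 - A * Ad) * E = 0)
    (h2 : E * (1 - Bd * B) * (1 - Nd * N) = 0)
    (h3 : (1 - A * Ad) * E * (1 - Dd * D) = 0)
    (h4 : (1 - C * Cd) * E * (1 - Bd * B) = 0)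
    (T₄ : Matrix l s (Quaternion ℝ)) (T₅ T₆ : Matrix p r (Quaternion ℝ))
    (T₇ T₈ : Matrix l s (Quaternion ℝ)) :
    A * (Ad * E * Bd - Ad * C * Md * E * Bd - Ad * S * Cd * E * Nd * D * Bd
        - Ad * S * T₄ * (1 - N * Nd) * D * Bd
        + (1 - Ad * A) * T₅ + T₆ * (1 - B * Bd)) * B
    + C * (Md * E * Dd + Sd * S * Cd * E * Nd
        + (1 - Md * M) * (1 - Sd * S) * T₇
        + (1 - Md * M) * T₄ * (1 - N * Nd) + T₈ * (1 - D * Dd)) * D = E := by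
  simp only [Matrix.mul_sub, Matrix.sub_mul, Matrix.mul_add, Matrix.add_mul,
    Matrix.mul_one, Matrix.one_mul, Matrix.mul_assoc]
  -- basic consequences of the Penrose equations
  have hBB : B * (Bd * B) = B := by rw [← Matrix.mul_assoc, hB.1]
  have hDD : D * (Dd * D) = D := by rw [← Matrix.mul_assoc, hD.1]
  have gA : ∀ x : Matrix p n (Quaternion ℝ), A * (Ad * (A * x)) = A * x := by
    intro x; simp only [← Matrix.mul_assoc]; rw [hA.1]
  have hAAdC : A * Ad * C = C - M := by
    rw [hM, Matrix.sub_mul, Matrix.one_mul]; abel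
  have hAAdS : A * Ad * S = S := by
    rw [hS, ← Matrix.mul_assoc, hAAdC, Matrix.sub_mul]
    rw [show M * (1 - Md * M) = 0 from by
      rw [Matrix.mul_sub, Matrix.mul_one, ← Matrix.mul_assoc, hMd.1, sub_self]]
    rw [sub_zero]
  have gS : ∀ x : Matrix l n (Quaternion ℝ), A * (Ad * (S * x)) = S * x := by
    intro x; simp only [← Matrix.mul_assoc]; rw [hAAdS]
  have gC : ∀ x : Matrix l n (Quaternion ℝ),
      A * (Ad * (C * x)) = C * x - M * x := by
    intro x; simp only [← Matrix.mul_assoc]; rw [hAAdC, Matrix.sub_mul]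
  have hDBB : D * (Bd * B) = D - N := by
    rw [hN, Matrix.mul_sub, Matrix.mul_one]; abel
  have hNNN : N * (Nd * N) = N := by rw [← Matrix.mul_assoc, hNd.1]
  -- Md * A = 0
  have hMH : Mᴴ * A = 0 := by
    rw [hM, Matrix.conjTranspose_mul, Matrix.conjTranspose_sub,
      Matrix.conjTranspose_one, hA.2.2.1, Matrix.mul_assoc, Matrix.sub_mul,
      Matrix.one_mul, hA.1, sub_self, Matrix.mul_zero]
  have hMdA : Md * A = 0 := by
    have h5 : Md = Md * Mdᴴ * Mᴴ := by
      conv_lhs => rw [← hMd.2.1]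
      rw [Matrix.mul_assoc, ← hMd.2.2.1, Matrix.conjTranspose_mul,
        ← Matrix.mul_assoc]
    conv_lhs => rw [h5]
    rw [Matrix.mul_assoc, hMH, Matrix.mul_zero]
  have zMdA : Md * (A * (Ad * E)) = 0 := by
    rw [← Matrix.mul_assoc, hMdA, Matrix.zero_mul]
  -- f1 : M*(Md*E) = E - A*(Ad*E)
  have h1' := h1
  simp only [Matrix.sub_mul, Matrix.one_mul, Matrix.mul_sub, Matrix.mul_assoc] at h1'
  rw [show M * (Md * (A * (Ad * E))) = 0 from by rw [zMdA, Matrix.mul_zero],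
    sub_zero] at h1'
  have f1 : E - A * (Ad * E) = M * (Md * E) := by
    rw [← sub_eq_zero]
    calc E - A * (Ad * E) - M * (Md * E)
        = E - M * (Md * E) - A * (Ad * E) := by abel
      _ = 0 := h1'
  have hMME : M * (Md * (E * (Bd * B))) = E * (Bd * B) - A * (Ad * (E * (Bd * B))) := by
    have := congrArg (fun X => X * (Bd * B)) f1.symm
    simp only [Matrix.sub_mul, Matrix.mul_assoc] at this
    exact this
  -- f3 : Md*(E*(Dd*D)) = Md*E
  have h3' := congrArg (fun X => Md * X) h3
  simp only [Matrix.sub_mul, Matrix.one_mul, Matrix.mul_sub, Matrix.mul_one,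
    Matrix.mul_assoc, Matrix.mul_zero] at h3'
  rw [show Md * (A * (Ad * E)) = 0 from zMdA,
    show Md * (A * (Ad * (E * (Dd * D)))) = 0 from by
      rw [← Matrix.mul_assoc, hMdA, Matrix.zero_mul],
    sub_zero, sub_zero] at h3'
  have f3 : Md * (E * (Dd * D)) = Md * E := (sub_eq_zero.mp h3').symm
  -- Bd*B*Nd = 0 and f2'
  have hNH : Bd * B * Nᴴ = 0 := by
    rw [hN, Matrix.conjTranspose_mul, Matrix.conjTranspose_sub,
      Matrix.conjTranspose_one, hB.2.2.2, ← Matrix.mul_assoc, Matrix.mul_sub,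
      Matrix.mul_one,
      show Bd * B * (Bd * B) = Bd * B from by rw [← Matrix.mul_assoc, hB.2.1],
      sub_self, Matrix.zero_mul]
  have hBdBNd : Bd * B * Nd = 0 := by
    have h6 : Nd = Nᴴ * (Ndᴴ * Nd) := by
      conv_lhs => rw [← hNd.2.1]
      rw [← hNd.2.2.2, Matrix.conjTranspose_mul, Matrix.mul_assoc]
    conv_lhs => rw [h6]
    rw [← Matrix.mul_assoc, hNH, Matrix.zero_mul]
  have zBN : Bd * (B * (Nd * N)) = 0 := by
    simp only [← Matrix.mul_assoc]
    rw [hBdBNd, Matrix.zero_mul]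
  have h2' := h2
  simp only [Matrix.mul_sub, Matrix.sub_mul, Matrix.mul_one,
    Matrix.mul_assoc] at h2'
  rw [show E * (Bd * (B * (Nd * N))) = 0 from by rw [zBN, Matrix.mul_zero]] at h2'
  have f2' : E * (Nd * N) = E - E * (Bd * B) := by
    rw [← sub_eq_zero]
    calc E * (Nd * N) - (E - E * (Bd * B))
        = -(E - E * (Bd * B) - (E * (Nd * N) - 0)) := by abel
      _ = 0 := by rw [h2', neg_zero]
  -- Sd*S facts
  have hMdMidem : Md * M * (Md * M) = Md * M := by
    rw [← Matrix.mul_assoc, hMd.2.1]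
  have hSH : Sᴴ = (1 - Md * M) * Cᴴ := by
    rw [hS, Matrix.conjTranspose_mul, Matrix.conjTranspose_sub,
      Matrix.conjTranspose_one, hMd.2.2.2]
  have key0 : Md * M * (Sd * S) = 0 := by
    rw [← hSd.2.2.2, Matrix.conjTranspose_mul, hSH]
    simp only [← Matrix.mul_assoc]
    rw [Matrix.mul_sub, Matrix.mul_one, hMdMidem, sub_self, Matrix.zero_mul,
      Matrix.zero_mul]
  have gMdMSdS : ∀ x : Matrix l n (Quaternion ℝ),
      Md * (M * (Sd * (S * x))) = 0 := by
    intro x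
    simp only [← Matrix.mul_assoc]
    rw [show Md * M * Sd * S = 0 from by rw [Matrix.mul_assoc (Md * M)]; exact key0,
      Matrix.zero_mul]
  have hCSdS : C * Sd * S = S := by
    have e1 : C - S = C * (Md * M) := by
      rw [hS, Matrix.mul_sub, Matrix.mul_one]; abel
    have e2 : C * (Sd * S) - S * (Sd * S) = 0 := by
      rw [← Matrix.sub_mul, e1, Matrix.mul_assoc, key0, Matrix.mul_zero]
    have e3 : S * (Sd * S) = S := by rw [← Matrix.mul_assoc, hSd.1]
    rw [Matrix.mul_assoc]
    conv_rhs => rw [← e3]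
    exact sub_eq_zero.mp e2
  have gSdS : ∀ x : Matrix l n (Quaternion ℝ), C * (Sd * (S * x)) = S * x := by
    intro x
    simp only [← Matrix.mul_assoc]
    rw [hCSdS]
  have hSx : ∀ x : Matrix l n (Quaternion ℝ),
      S * x = C * x - C * (Md * (M * x)) := by
    intro x
    conv_lhs => rw [hS]
    rw [Matrix.mul_sub, Matrix.mul_one, Matrix.sub_mul]
    simp only [Matrix.mul_assoc]
  -- Md*C = Md*M, f4, f6C, f5''
  have hMdC : Md * C = Md * M := by
    conv_rhs => rw [hM]
    rw [Matrix.sub_mul, Matrix.one_mul, Matrix.mul_sub,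
      show Md * (A * Ad * C) = 0 from by
        simp only [← Matrix.mul_assoc]; rw [hMdA, Matrix.zero_mul, Matrix.zero_mul],
      sub_zero]
  have h4' := h4
  simp only [Matrix.mul_sub, Matrix.sub_mul, Matrix.mul_one, Matrix.one_mul,
    Matrix.mul_assoc] at h4'
  have f4 : E - E * (Bd * B) = C * (Cd * E) - C * (Cd * (E * (Bd * B))) := by
    rw [← sub_eq_zero]
    calc E - E * (Bd * B) - (C * (Cd * E) - C * (Cd * (E * (Bd * B))))
        = E - C * (Cd * E) - (E * (Bd * B) - C * (Cd * (E * (Bd * B)))) := by abel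
      _ = 0 := h4'
  have e5 : Md * E - Md * (E * (Bd * B))
      = Md * (M * (Cd * E)) - Md * (M * (Cd * (E * (Bd * B)))) := by
    have := congrArg (fun X => Md * X) f4
    simp only [Matrix.mul_sub, ← Matrix.mul_assoc, hMdC] at this
    simp only [Matrix.mul_assoc] at this
    exact this
  have e6 := congrArg (fun X => C * X) e5
  simp only [Matrix.mul_sub, Matrix.mul_assoc] at e6
  have f6C : C * (Md * E) = (C * (Md * (M * (Cd * E)))
      - C * (Md * (M * (Cd * (E * (Bd * B)))))) + C * (Md * (E * (Bd * B))) := by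
    rw [← sub_eq_zero]
    calc C * (Md * E) - ((C * (Md * (M * (Cd * E)))
          - C * (Md * (M * (Cd * (E * (Bd * B)))))) + C * (Md * (E * (Bd * B))))
        = (C * (Md * E) - C * (Md * (E * (Bd * B))))
          - (C * (Md * (M * (Cd * E))) - C * (Md * (M * (Cd * (E * (Bd * B)))))) := by
          abel
      _ = 0 := by rw [e6, sub_self]
  have f5'' : E * (Bd * B) + (C * (Cd * E) - C * (Cd * (E * (Bd * B)))) = E := by
    rw [← f4]; abel
  -- main computation
  rw [f3]
  rw [gA (T₅ * B), hBB, hDD]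
  simp only [gS]
  rw [gC]
  simp only [gSdS]
  rw [gMdMSdS, Matrix.mul_zero]
  rw [hMME]
  rw [hDBB]
  simp only [Matrix.mul_sub]
  rw [hNNN, f2']
  simp only [Matrix.mul_sub]
  rw [hSx (Cd * (E * (Nd * D))), hSx (Cd * E), hSx (Cd * (E * (Bd * B))),
    hSx (T₄ * D), hSx (T₄ * (N * (Nd * D))), hSx (T₄ * N), hSx (T₇ * D)]
  rw [f6C]
  conv_rhs => rw [← f5'']
  abel

set_option maxHeartbeats 2000000 in
/-- Under the consistency conditions, for arbitrary `T₁, …, T₈` the displayed tuple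
`(X, Y, Z, W)` solves `A X + Y B + C Z D + F W G = E`. -/
theorem four_term_solution_formula {m k o n p r l s : Type*}
    [Fintype m] [Fintype k] [Fintype o] [Fintype n] [Fintype p] [Fintype r]
    [Fintype l] [Fintype s]
    [DecidableEq m] [DecidableEq n] [DecidableEq k] [DecidableEq o]
    [DecidableEq p] [DecidableEq r] [DecidableEq l] [DecidableEq s]
    (A : Matrix m k (Quaternion ℝ)) (B : Matrix o n (Quaternion ℝ))
    (C : Matrix m p (Quaternion ℝ)) (D : Matrix r n (Quaternion ℝ))
    (F : Matrix m l (Quaternion ℝ)) (G : Matrix s n (Quaternion ℝ))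
    (E : Matrix m n (Quaternion ℝ))
    (Ad : Matrix k m (Quaternion ℝ)) (Bd : Matrix n o (Quaternion ℝ))
    (hA : IsMP A Ad) (hB : IsMP B Bd)
    (A₀ : Matrix m p (Quaternion ℝ)) (B₀ : Matrix r n (Quaternion ℝ))
    (C₀ : Matrix m l (Quaternion ℝ)) (D₀ : Matrix s n (Quaternion ℝ))
    (E₀ : Matrix m n (Quaternion ℝ))
    (hA₀ : A₀ = (1 - A * Ad) * C) (hB₀ : B₀ = D * (1 - Bd * B))
    (hC₀ : C₀ = (1 - A * Ad) * F) (hD₀ : D₀ = G * (1 - Bd * B))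
    (hE₀ : E₀ = (1 - A * Ad) * E * (1 - Bd * B))
    (A₀d : Matrix p m (Quaternion ℝ)) (B₀d : Matrix n r (Quaternion ℝ))
    (C₀d : Matrix l m (Quaternion ℝ)) (D₀d : Matrix n s (Quaternion ℝ))
    (hA₀d : IsMP A₀ A₀d) (hB₀d : IsMP B₀ B₀d)
    (hC₀d : IsMP C₀ C₀d) (hD₀d : IsMP D₀ D₀d)
    (M : Matrix m l (Quaternion ℝ)) (N : Matrix s n (Quaternion ℝ))
    (hM : M = (1 - A₀ * A₀d) * C₀) (hN : N = D₀ * (1 - B₀d * B₀))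
    (Md : Matrix l m (Quaternion ℝ)) (Nd : Matrix n s (Quaternion ℝ))
    (hMd : IsMP M Md) (hNd : IsMP N Nd)
    (S : Matrix m l (Quaternion ℝ)) (hS : S = C₀ * (1 - Md * M))
    (Sd : Matrix l m (Quaternion ℝ)) (hSd : IsMP S Sd)
    (h1 : (1 - M * Md) * (1 - A₀ * A₀d) * E₀ = 0)
    (h2 : E₀ * (1 - B₀d * B₀) * (1 - Nd * N) = 0)
    (h3 : (1 - A₀ * A₀d) * E₀ * (1 - D₀d * D₀) = 0)
    (h4 : (1 - C₀ * C₀d) * E₀ * (1 - B₀d * B₀) = 0) :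
    ∀ (T₁ : Matrix k o (Quaternion ℝ)) (T₂ : Matrix k n (Quaternion ℝ))
      (T₃ : Matrix m o (Quaternion ℝ)) (T₄ : Matrix l s (Quaternion ℝ))
      (T₅ T₆ : Matrix p r (Quaternion ℝ)) (T₇ T₈ : Matrix l s (Quaternion ℝ))
      (X : Matrix k n (Quaternion ℝ)) (Y : Matrix m o (Quaternion ℝ))
      (Z : Matrix p r (Quaternion ℝ)) (W : Matrix l s (Quaternion ℝ)),
      Z = A₀d * E₀ * B₀d - A₀d * C₀ * Md * E₀ * B₀d
          - A₀d * S * C₀d * E₀ * Nd * D₀ * B₀d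
          - A₀d * S * T₄ * (1 - N * Nd) * D₀ * B₀d
          + (1 - A₀d * A₀) * T₅ + T₆ * (1 - B₀ * B₀d) →
      W = Md * E₀ * D₀d + Sd * S * C₀d * E₀ * Nd
          + (1 - Md * M) * (1 - Sd * S) * T₇
          + (1 - Md * M) * T₄ * (1 - N * Nd) + T₈ * (1 - D₀ * D₀d) →
      X = Ad * (E - C * Z * D - F * W * G) - T₁ * B + (1 - Ad * A) * T₂ →
      Y = (1 - A * Ad) * (E - C * Z * D - F * W * G) * Bd + A * T₁ + T₃ * (1 - B * Bd) →
      A * X + Y * B + C * Z * D + F * W * G = E := by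
  intro T₁ T₂ T₃ T₄ T₅ T₆ T₇ T₈ X Y Z W hZ hW hX hY
  have key : A₀ * Z * B₀ + C₀ * W * D₀ = E₀ := by
    rw [hZ, hW]
    exact aux A₀ B₀ C₀ D₀ E₀ A₀d B₀d C₀d D₀d hA₀d hB₀d hC₀d hD₀d M N hM hN
      Md Nd hMd hNd S hS Sd hSd h1 h2 h3 h4 T₄ T₅ T₆ T₇ T₈
  set Q := E - C * Z * D - F * W * G with hQ
  have hQ0' : Q - A * (Ad * Q) - (Q * (Bd * B) - A * (Ad * (Q * (Bd * B)))) = 0 := by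
    have hQ0 : (1 - A * Ad) * Q * (1 - Bd * B) = 0 := by
      calc (1 - A * Ad) * Q * (1 - Bd * B)
          = E₀ - (A₀ * Z * B₀ + C₀ * W * D₀) := by
            rw [hQ, hE₀, hA₀, hB₀, hC₀, hD₀]
            simp only [Matrix.mul_sub, Matrix.sub_mul, Matrix.mul_add,
              Matrix.add_mul, Matrix.mul_one, Matrix.one_mul, Matrix.mul_assoc]
            abel
        _ = 0 := by rw [key, sub_self]
    calc Q - A * (Ad * Q) - (Q * (Bd * B) - A * (Ad * (Q * (Bd * B))))
        = (1 - A * Ad) * Q * (1 - Bd * B) := by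
          simp only [Matrix.mul_sub, Matrix.sub_mul, Matrix.mul_one,
            Matrix.one_mul, Matrix.mul_assoc]
      _ = 0 := hQ0
  have hAX : A * X = A * (Ad * Q) - A * (T₁ * B) := by
    rw [hX]
    simp only [Matrix.mul_add, Matrix.mul_sub, Matrix.sub_mul, Matrix.mul_one,
      Matrix.one_mul, Matrix.mul_assoc]
    rw [show A * (Ad * (A * T₂)) = A * T₂ from by
      simp only [← Matrix.mul_assoc]; rw [hA.1]]
    abel
  have hYB : Y * B = Q * (Bd * B) - A * (Ad * (Q * (Bd * B))) + A * (T₁ * B) := by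
    rw [hY]
    simp only [Matrix.mul_add, Matrix.mul_sub, Matrix.sub_mul, Matrix.add_mul,
      Matrix.mul_one, Matrix.one_mul, Matrix.mul_assoc]
    rw [show B * (Bd * B) = B from by simp only [← Matrix.mul_assoc]; rw [hB.1]]
    abel
  have hCF : C * Z * D + F * W * G = E - Q := by rw [hQ]; abel
  rw [← sub_eq_zero]
  calc A * X + Y * B + C * Z * D + F * W * G - E
      = A * X + Y * B + (C * Z * D + F * W * G) - E := by abel
    _ = A * (Ad * Q) - A * (T₁ * B)
        + (Q * (Bd * B) - A * (Ad * (Q * (Bd * B))) + A * (T₁ * B))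
        + (E - Q) - E := by rw [hAX, hYB, hCF]
    _ = -(Q - A * (Ad * Q) - (Q * (Bd * B) - A * (Ad * (Q * (Bd * B))))) := by abel
    _ = 0 := by rw [hQ0', neg_zero]
end

section
/- Let A ∈ ℍ^{m×k}, B ∈ ℍ^{o×n}, C ∈ ℍ^{m×p}, D ∈ ℍ^{r×n}, F ∈ ℍ^{m×l}, G ∈ ℍ^{s×n}, E ∈ ℍ^{m×n} be quaternion matrices and set A₀ = R_A C, B₀ = D L_B, C₀ = R_A F, D₀ = G L_B, E₀ = R_A E L_B, M = R_{A₀} C₀, N = D₀ L_{B₀}, S = C₀ L_M. If (X, Y, Z, W) with X ∈ ℍ^{k×n}, Y ∈ ℍ^{m×o}, Z ∈ ℍ^{p×r}, W ∈ ℍ^{l×s} is any solution of A X + Y B + C Z D + F W G = E, then there exist quaternion matrices T₁, …, T₈ of the appropriate sizes such that Z = A₀† E₀ B₀† − A₀† C₀ M† E₀ B₀† − A₀† S C₀† E₀ N† D₀ B₀† − A₀† S T₄ R_N D₀ B₀† + L_{A₀} T₅ + T₆ R_{B₀}, W = M† E₀ D₀† + S† S C₀† E₀ N† + L_M L_S T₇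 + L_M T₄ R_N + T₈ R_{D₀}, X = A† (E − C Z D − F W G) − T₁ B + L_A T₂, and Y = R_A (E − C Z D − F W G) B† + A T₁ + T₃ R_B. -/
open Matrix

namespace MPaux

theorem tripleA {m n : Type*} [Fintype m] [Fintype n]
    (A : Matrix m n (Quaternion ℝ)) (X : Matrix n m (Quaternion ℝ))
    (h : IsMP A X) {q : Type*} (U : Matrix n q (Quaternion ℝ)) :
    A * (X * (A * U)) = A * U := by
  rw [← Matrix.mul_assoc, ← Matrix.mul_assoc, h.1]

theorem tail_zero {a b c q : Type*} [Fintype b] [Fintype c]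
    (X : Matrix a b (Quaternion ℝ)) (Y : Matrix b c (Quaternion ℝ))
    (h : X * Y = 0) (U : Matrix c q (Quaternion ℝ)) : X * (Y * U) = 0 := by
  rw [← Matrix.mul_assoc, h, Matrix.zero_mul]

theorem tail_eq {a b b' c q : Type*} [Fintype b] [Fintype b'] [Fintype c]
    (X : Matrix a b (Quaternion ℝ)) (Y : Matrix b c (Quaternion ℝ))
    (X' : Matrix a b' (Quaternion ℝ)) (Y' : Matrix b' c (Quaternion ℝ))
    (h : X * Y = X' * Y') (U : Matrix c q (Quaternion ℝ)) :
    X * (Y * U) = X' * (Y' * U) := by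
  rw [← Matrix.mul_assoc, h, Matrix.mul_assoc]

theorem one_sub_idem {n : Type*} [Fintype n] [DecidableEq n]
    (P : Matrix n n (Quaternion ℝ)) (h : P * P = P) :
    (1 - P) * (1 - P) = 1 - P := by
  rw [Matrix.mul_sub, Matrix.mul_one, Matrix.sub_mul, Matrix.one_mul, h]
  abel

theorem absorb_right {m n : Type*} [Fintype m] [Fintype n]
    {A : Matrix m n (Quaternion ℝ)} {X : Matrix n m (Quaternion ℝ)} (h : IsMP A X)
    {P : Matrix m m (Quaternion ℝ)} (hP : Pᴴ = P) (hPA : P * A = A) :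
    X * P = X := by
  have h1 : Aᴴ * P = Aᴴ := by rw [← hP, ← Matrix.conjTranspose_mul, hPA]
  have h2 : X * (Xᴴ * Aᴴ) = X := by
    rw [← Matrix.conjTranspose_mul, h.2.2.1, ← Matrix.mul_assoc, h.2.1]
  calc X * P = (X * (Xᴴ * Aᴴ)) * P := by rw [h2]
    _ = X * (Xᴴ * (Aᴴ * P)) := by simp only [Matrix.mul_assoc]
    _ = X * (Xᴴ * Aᴴ) := by rw [h1]
    _ = X := h2

theorem absorb_left {m n : Type*} [Fintype m] [Fintype n]
    {A : Matrix m n (Quaternion ℝ)} {X : Matrix n m (Quaternion ℝ)} (h : IsMP A X)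
    {P : Matrix n n (Quaternion ℝ)} (hP : Pᴴ = P) (hAP : A * P = A) :
    P * X = X := by
  have h1 : P * Aᴴ = Aᴴ := by rw [← hP, ← Matrix.conjTranspose_mul, hAP]
  have h2 : (Aᴴ * Xᴴ) * X = X := by
    rw [← Matrix.conjTranspose_mul, h.2.2.2, h.2.1]
  calc P * X = P * ((Aᴴ * Xᴴ) * X) := by rw [h2]
    _ = (P * Aᴴ) * (Xᴴ * X) := by simp only [Matrix.mul_assoc]
    _ = Aᴴ * (Xᴴ * X) := by rw [h1]
    _ = X := by rw [← Matrix.mul_assoc, h2]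

end MPaux
set_option maxHeartbeats 4000000 in
/-- Every solution `(X, Y, Z, W)` of `A X + Y B + C Z D + F W G = E` has the displayed
parametric form for some `T₁, …, T₈`. -/
theorem four_term_solution_form {m k o n p r l s : Type*}
    [Fintype m] [Fintype k] [Fintype o] [Fintype n] [Fintype p] [Fintype r]
    [Fintype l] [Fintype s]
    [DecidableEq m] [DecidableEq n] [DecidableEq k] [DecidableEq o]
    [DecidableEq p] [DecidableEq r] [DecidableEq l] [DecidableEq s]
    (A : Matrix m k (Quaternion ℝ)) (B : Matrix o n (Quaternion ℝ))
    (C : Matrix m p (Quaternion ℝ)) (D : Matrix r n (Quaternion ℝ))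
    (F : Matrix m l (Quaternion ℝ)) (G : Matrix s n (Quaternion ℝ))
    (E : Matrix m n (Quaternion ℝ))
    (Ad : Matrix k m (Quaternion ℝ)) (Bd : Matrix n o (Quaternion ℝ))
    (hA : IsMP A Ad) (hB : IsMP B Bd)
    (A₀ : Matrix m p (Quaternion ℝ)) (B₀ : Matrix r n (Quaternion ℝ))
    (C₀ : Matrix m l (Quaternion ℝ)) (D₀ : Matrix s n (Quaternion ℝ))
    (E₀ : Matrix m n (Quaternion ℝ))
    (hA₀ : A₀ = (1 - A * Ad) * C) (hB₀ : B₀ = D * (1 - Bd * B))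
    (hC₀ : C₀ = (1 - A * Ad) * F) (hD₀ : D₀ = G * (1 - Bd * B))
    (hE₀ : E₀ = (1 - A * Ad) * E * (1 - Bd * B))
    (A₀d : Matrix p m (Quaternion ℝ)) (B₀d : Matrix n r (Quaternion ℝ))
    (C₀d : Matrix l m (Quaternion ℝ)) (D₀d : Matrix n s (Quaternion ℝ))
    (hA₀d : IsMP A₀ A₀d) (hB₀d : IsMP B₀ B₀d)
    (hC₀d : IsMP C₀ C₀d) (hD₀d : IsMP D₀ D₀d)
    (M : Matrix m l (Quaternion ℝ)) (N : Matrix s n (Quaternion ℝ))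
    (hM : M = (1 - A₀ * A₀d) * C₀) (hN : N = D₀ * (1 - B₀d * B₀))
    (Md : Matrix l m (Quaternion ℝ)) (Nd : Matrix n s (Quaternion ℝ))
    (hMd : IsMP M Md) (hNd : IsMP N Nd)
    (S : Matrix m l (Quaternion ℝ)) (hS : S = C₀ * (1 - Md * M))
    (Sd : Matrix l m (Quaternion ℝ)) (hSd : IsMP S Sd)
    (X : Matrix k n (Quaternion ℝ)) (Y : Matrix m o (Quaternion ℝ))
    (Z : Matrix p r (Quaternion ℝ)) (W : Matrix l s (Quaternion ℝ))
    (hsol : A * X + Y * B + C * Z * D + F * W * G = E) :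
    ∃ (T₁ : Matrix k o (Quaternion ℝ)) (T₂ : Matrix k n (Quaternion ℝ))
      (T₃ : Matrix m o (Quaternion ℝ)) (T₄ : Matrix l s (Quaternion ℝ))
      (T₅ T₆ : Matrix p r (Quaternion ℝ)) (T₇ T₈ : Matrix l s (Quaternion ℝ)),
      Z = A₀d * E₀ * B₀d - A₀d * C₀ * Md * E₀ * B₀d
          - A₀d * S * C₀d * E₀ * Nd * D₀ * B₀d
          - A₀d * S * T₄ * (1 - N * Nd) * D₀ * B₀d
          + (1 - A₀d * A₀) * T₅ + T₆ * (1 - B₀ * B₀d) ∧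
      W = Md * E₀ * D₀d + Sd * S * C₀d * E₀ * Nd
          + (1 - Md * M) * (1 - Sd * S) * T₇
          + (1 - Md * M) * T₄ * (1 - N * Nd) + T₈ * (1 - D₀ * D₀d) ∧
      X = Ad * (E - C * Z * D - F * W * G) - T₁ * B + (1 - Ad * A) * T₂ ∧
      Y = (1 - A * Ad) * (E - C * Z * D - F * W * G) * Bd + A * T₁ + T₃ * (1 - B * Bd) := by
  -- basic tail lemma for the outer pair (A, B)
  have hBt : B * (Bd * B) = B := by rw [← Matrix.mul_assoc, hB.1]
  -- the reduced equation  A₀ Z B₀ + C₀ W D₀ = E₀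
  have hstar : A₀ * (Z * B₀) + C₀ * (W * D₀) = E₀ := by
    rw [hA₀, hB₀, hC₀, hD₀, hE₀, ← hsol]
    simp only [Matrix.mul_add, Matrix.add_mul, Matrix.mul_sub, Matrix.sub_mul,
      Matrix.mul_one, Matrix.one_mul, Matrix.mul_assoc, MPaux.tripleA A Ad hA, hBt]
    abel
  -- projections for the second layer
  have g1 : (1 - A₀ * A₀d) * A₀ = 0 := by
    rw [Matrix.sub_mul, Matrix.one_mul, hA₀d.1, sub_self]
  have g2 : B₀ * (1 - B₀d * B₀) = 0 := by
    rw [Matrix.mul_sub, Matrix.mul_one, ← Matrix.mul_assoc, hB₀d.1, sub_self]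
  have hermRa0 : (1 - A₀ * A₀d)ᴴ = 1 - A₀ * A₀d := by
    rw [Matrix.conjTranspose_sub, Matrix.conjTranspose_one, hA₀d.2.2.1]
  have idemAAd : (A₀ * A₀d) * (A₀ * A₀d) = A₀ * A₀d := by
    rw [← Matrix.mul_assoc, hA₀d.1]
  have idemRa0 := MPaux.one_sub_idem _ idemAAd
  have hRa0M : (1 - A₀ * A₀d) * M = M := by
    rw [hM, ← Matrix.mul_assoc, idemRa0]
  have p1 : Md * (1 - A₀ * A₀d) = Md := MPaux.absorb_right hMd hermRa0 hRa0M
  have p3 : Md * A₀ = 0 := by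
    calc Md * A₀ = Md * ((1 - A₀ * A₀d) * A₀) := by rw [← Matrix.mul_assoc, p1]
      _ = 0 := by rw [g1, Matrix.mul_zero]
  have hermLb0 : (1 - B₀d * B₀)ᴴ = 1 - B₀d * B₀ := by
    rw [Matrix.conjTranspose_sub, Matrix.conjTranspose_one, hB₀d.2.2.2]
  have idemBdB : (B₀d * B₀) * (B₀d * B₀) = B₀d * B₀ := by
    rw [← Matrix.mul_assoc, hB₀d.2.1]
  have idemLb0 := MPaux.one_sub_idem _ idemBdB
  have hNLb0 : N * (1 - B₀d * B₀) = N := by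
    rw [hN, Matrix.mul_assoc, idemLb0]
  have p2 : (1 - B₀d * B₀) * Nd = Nd := MPaux.absorb_left hNd hermLb0 hNLb0
  have hermLM : (1 - Md * M)ᴴ = 1 - Md * M := by
    rw [Matrix.conjTranspose_sub, Matrix.conjTranspose_one, hMd.2.2.2]
  have idemMdM : (Md * M) * (Md * M) = Md * M := by
    rw [← Matrix.mul_assoc, hMd.2.1]
  have idemLM := MPaux.one_sub_idem _ idemMdM
  have hSLM : S * (1 - Md * M) = S := by
    rw [hS, Matrix.mul_assoc, idemLM]
  have p4 : (1 - Md * M) * Sd = Sd := MPaux.absorb_left hSd hermLM hSLM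
  have p5 : (Md * M) * Sd = 0 := by
    rw [Matrix.sub_mul, Matrix.one_mul] at p4
    exact sub_eq_self.mp p4
  have p5t : ∀ U : Matrix m s (Quaternion ℝ), Md * (M * (Sd * U)) = 0 := fun U => by
    rw [← Matrix.mul_assoc, ← Matrix.mul_assoc, p5, Matrix.zero_mul]
  -- Md C₀ = Md M
  have hMeq : M = C₀ - A₀ * (A₀d * C₀) := by
    rw [hM, Matrix.sub_mul, Matrix.one_mul, Matrix.mul_assoc]
  have kG : Md * C₀ = Md * M := by
    rw [hMeq, Matrix.mul_sub, MPaux.tail_zero Md A₀ p3 (A₀d * C₀), sub_zero]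
  -- consequences of hstar
  have hMWd : M * (W * D₀) = (1 - A₀ * A₀d) * E₀ := by
    calc M * (W * D₀) = (1 - A₀ * A₀d) * (C₀ * (W * D₀)) := by
          rw [hM, Matrix.mul_assoc]
      _ = (1 - A₀ * A₀d) * (A₀ * (Z * B₀)) + (1 - A₀ * A₀d) * (C₀ * (W * D₀)) := by
          rw [MPaux.tail_zero _ _ g1 (Z * B₀), zero_add]
      _ = (1 - A₀ * A₀d) * (A₀ * (Z * B₀) + C₀ * (W * D₀)) := by rw [Matrix.mul_add]
      _ = (1 - A₀ * A₀d) * E₀ := by rw [hstar]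
  have hZB₀ : (A₀ * (Z * B₀)) * (1 - B₀d * B₀) = 0 := by
    rw [Matrix.mul_assoc, Matrix.mul_assoc, g2, Matrix.mul_zero, Matrix.mul_zero]
  have hCWN : C₀ * (W * N) = E₀ * (1 - B₀d * B₀) := by
    calc C₀ * (W * N) = (C₀ * (W * D₀)) * (1 - B₀d * B₀) := by
          simp only [hN, Matrix.mul_assoc]
      _ = (A₀ * (Z * B₀) + C₀ * (W * D₀)) * (1 - B₀d * B₀) := by
          rw [Matrix.add_mul, hZB₀, zero_add]
      _ = E₀ * (1 - B₀d * B₀) := by rw [hstar]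
  have kB : E₀ * Nd = C₀ * (W * (N * Nd)) := by
    calc E₀ * Nd = E₀ * ((1 - B₀d * B₀) * Nd) := by rw [p2]
      _ = (E₀ * (1 - B₀d * B₀)) * Nd := (Matrix.mul_assoc _ _ _).symm
      _ = (C₀ * (W * N)) * Nd := by rw [hCWN]
      _ = C₀ * (W * (N * Nd)) := by simp only [Matrix.mul_assoc]
  have kBt : ∀ U : Matrix s r (Quaternion ℝ),
      E₀ * (Nd * U) = C₀ * (W * (N * (Nd * U))) := fun U => by
    rw [← Matrix.mul_assoc, kB]
    simp only [Matrix.mul_assoc]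
  -- S expansion and triple-product collapses
  have Sexp_r : ∀ U : Matrix l r (Quaternion ℝ),
      S * U = C₀ * U - C₀ * (Md * (M * U)) := fun U => by
    calc S * U = C₀ * ((1 - Md * M) * U) := by rw [hS, Matrix.mul_assoc]
      _ = C₀ * U - C₀ * (Md * (M * U)) := by
          rw [Matrix.sub_mul, Matrix.one_mul, Matrix.mul_sub, Matrix.mul_assoc]
  have Sexp_s : ∀ U : Matrix l s (Quaternion ℝ),
      S * U = C₀ * U - C₀ * (Md * (M * U)) := fun U => by
    calc S * U = C₀ * ((1 - Md * M) * U) := by rw [hS, Matrix.mul_assoc]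
      _ = C₀ * U - C₀ * (Md * (M * U)) := by
          rw [Matrix.sub_mul, Matrix.one_mul, Matrix.mul_sub, Matrix.mul_assoc]
  have Mtr_r : ∀ U : Matrix l r (Quaternion ℝ),
      M * (C₀d * (C₀ * U)) = M * U := fun U => by
    calc M * (C₀d * (C₀ * U)) = (1 - A₀ * A₀d) * (C₀ * (C₀d * (C₀ * U))) := by
          rw [hM, Matrix.mul_assoc]
      _ = (1 - A₀ * A₀d) * (C₀ * U) := by rw [MPaux.tripleA C₀ C₀d hC₀d]
      _ = M * U := by rw [hM, Matrix.mul_assoc]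
  have Mtr_s : ∀ U : Matrix l s (Quaternion ℝ),
      M * (C₀d * (C₀ * U)) = M * U := fun U => by
    calc M * (C₀d * (C₀ * U)) = (1 - A₀ * A₀d) * (C₀ * (C₀d * (C₀ * U))) := by
          rw [hM, Matrix.mul_assoc]
      _ = (1 - A₀ * A₀d) * (C₀ * U) := by rw [MPaux.tripleA C₀ C₀d hC₀d]
      _ = M * U := by rw [hM, Matrix.mul_assoc]
  have Str_s : ∀ U : Matrix l s (Quaternion ℝ),
      S * (C₀d * (C₀ * U)) = S * U := fun U => by
    rw [Sexp_s (C₀d * (C₀ * U)), Sexp_s U, MPaux.tripleA C₀ C₀d hC₀d U, Mtr_s U]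
  -- rewrites eliminating E₀
  have e1B : E₀ * B₀d = A₀ * (Z * (B₀ * B₀d)) + C₀ * (W * (D₀ * B₀d)) := by
    rw [← hstar]
    simp only [Matrix.add_mul, Matrix.mul_assoc]
  have e1D : E₀ * D₀d = A₀ * (Z * (B₀ * D₀d)) + C₀ * (W * (D₀ * D₀d)) := by
    rw [← hstar]
    simp only [Matrix.add_mul, Matrix.mul_assoc]
  -- the outer equation rewritten
  have hE' : E - C * Z * D - F * W * G = A * X + Y * B := by
    rw [← hsol]; abel
  refine ⟨Ad * Y, X, (1 - A * Ad) * Y, W, Z, A₀d * A₀ * Z, W * N * Nd, Md * M * W,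
    ?_, ?_, ?_, ?_⟩
  · -- Z equation
    simp only [Matrix.mul_assoc, Matrix.mul_add, Matrix.add_mul, Matrix.mul_sub,
      Matrix.sub_mul, Matrix.mul_one, Matrix.one_mul, e1B, kBt,
      MPaux.tail_zero Md A₀ p3, MPaux.tail_eq Md C₀ Md M kG,
      Sexp_r, MPaux.tripleA C₀ C₀d hC₀d, Mtr_r,
      Matrix.mul_zero, Matrix.zero_mul, add_zero, zero_add, sub_zero]
    abel
  · -- W equation
    simp only [Matrix.mul_assoc, Matrix.mul_add, Matrix.add_mul, Matrix.mul_sub,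
      Matrix.sub_mul, Matrix.mul_one, Matrix.one_mul, e1D, kB, Str_s,
      MPaux.tail_zero Md A₀ p3, MPaux.tail_eq Md C₀ Md M kG, p5t,
      Matrix.mul_zero, Matrix.zero_mul, add_zero, zero_add, sub_zero]
    abel
  · -- X equation
    rw [hE']
    simp only [Matrix.mul_add, Matrix.add_mul, Matrix.mul_sub, Matrix.sub_mul,
      Matrix.mul_one, Matrix.one_mul, Matrix.mul_assoc]
    abel
  · -- Y equation
    rw [hE']
    simp only [Matrix.mul_add, Matrix.add_mul, Matrix.mul_sub, Matrix.sub_mul,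
      Matrix.mul_one, Matrix.one_mul, Matrix.mul_assoc, MPaux.tripleA A Ad hA]
    abel
end
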